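/- arXiv:0906.2687 — 9 statements merged into one kernel-verified Lean document; each statement's English description precedes it below -/
import Mathlib

section
/- Let A be a finite nonempty set and T a symmetric, irreflexive, saturated relation on A. Then for every Q ∈ 𝒫^T(A), the set Q^T also belongs to 𝒫^T(A), and (Q^T)^T = Q. -/
/-- For `B ⊆ A`, `B^T := {l ∈ A | ∀ l₁ ∈ B, (l₁, l) ∈ T}`. -/
def polar {α : Type*} (T : α → α → Prop) (B : Set α) : Set α :=
  {l | ∀ l₁ ∈ B, T l₁ l}

/-- `𝒫_T(A)`: subsets whose distinct elements are pairwise related by `T`. -/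
def PTset {α : Type*} (T : α → α → Prop) : Set (Set α) :=
  {U | ∀ l ∈ U, ∀ l₁ ∈ U, l₁ ≠ l → T l l₁}

/-- `𝒫^T(A)`: the image of `𝒫_T(A)` under `B ↦ B^T`. -/
def PTup {α : Type*} (T : α → α → Prop) : Set (Set α) :=
  polar T '' PTset T

/-- `T` is symmetric: for all `l ≠ l₁`, `(l, l₁) ∈ T ↔ (l₁, l) ∈ T`. -/
def SymmRel {α : Type*} (T : α → α → Prop) : Prop :=
  ∀ l l₁, l ≠ l₁ → (T l l₁ ↔ T l₁ l)

/-- `T` is irreflexive. -/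
def IrreflRel {α : Type*} (T : α → α → Prop) : Prop :=
  ∀ l, ¬ T l l

/-- `M` is a maximal element of `𝒫_T(A)` with respect to inclusion. -/
def MaxPT {α : Type*} (T : α → α → Prop) (M : Set α) : Prop :=
  M ∈ PTset T ∧ ∀ M' ∈ PTset T, M ⊆ M' → M' = M

/-- `T` is saturated: for every maximal `M ∈ 𝒫_T(A)` and every `B ⊆ M`,
`B^T = ((M \ B)^T)^T`. -/
def SaturatedRel {α : Type*} (T : α → α → Prop) : Prop :=
  ∀ M, MaxPT T M → ∀ B ⊆ M, polar T B = polar T (polar T (M \ B))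
theorem stmt1 {α : Type*} [Fintype α] [Nonempty α] (T : α → α → Prop)
    (hsymm : SymmRel T) (hirr : IrreflRel T) (hsat : SaturatedRel T) :
    ∀ Q ∈ PTup T, polar T Q ∈ PTup T ∧ polar T (polar T Q) = Q := by
  rintro Q ⟨U, hU, rfl⟩
  -- find a maximal element M of PTset T containing U
  have hfin : ({M' | M' ∈ PTset T ∧ U ⊆ M'} : Set (Set α)).Finite :=
    Set.Finite.subset (Set.finite_univ) (Set.subset_univ _)
  have hne : ({M' | M' ∈ PTset T ∧ U ⊆ M'} : Set (Set α)).Nonempty :=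
    ⟨U, hU, subset_rfl⟩
  obtain ⟨M, ⟨hM, hUM⟩, hmax⟩ :=
    hfin.exists_maximalFor id _ hne
  have hMaxPT : MaxPT T M := by
    refine ⟨hM, fun M' hM' hMM' => ?_⟩
    exact Set.Subset.antisymm (hmax ⟨hM', hUM.trans hMM'⟩ hMM') hMM'
  -- saturation with B = U
  have h1 : polar T U = polar T (polar T (M \ U)) := hsat M hMaxPT U hUM
  -- saturation with B = M \ U
  have h2 : polar T (M \ U) = polar T (polar T (M \ (M \ U))) :=
    hsat M hMaxPT (M \ U) Set.diff_subset
  have hdd : M \ (M \ U) = U := Set.diff_diff_cancel_left hUM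
  rw [hdd] at h2
  -- so polar T (polar T U) = polar T (M \ U)
  have key : polar T (polar T U) = polar T (M \ U) := h2.symm
  constructor
  · refine ⟨M \ U, ?_, key.symm⟩
    intro l hl l₁ hl₁ hne'
    exact hM l hl.1 l₁ hl₁.1 hne'
  · rw [key, ← h1]
end

section
/- Let A be a finite nonempty set and T a symmetric, irreflexive, saturated relation on A. If Q, Q₁ ∈ 𝒫^T(A) and Q₁ ⊆ Q^T, then ((Q ∪ Q₁)^T)^T ∈ 𝒫^T(A); i.e. the partial operation Q ⊕ Q₁ := ((Q ∪ Q₁)^T)^T is well defined on 𝒫^T(A). -/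
section Aux

variable {α : Type*} (T : α → α → Prop)

lemma polar_anti {B C : Set α} (h : B ⊆ C) : polar T C ⊆ polar T B :=
  fun _ hl l₁ hl₁ => hl l₁ (h hl₁)

lemma subset_polar_polar (hsymm : SymmRel T) (hirr : IrreflRel T) (B : Set α) :
    B ⊆ polar T (polar T B) := by
  intro b hb l hl
  have h1 : T b l := hl b hb
  have hne : b ≠ l := by rintro rfl; exact hirr b h1
  exact (hsymm b l hne).mp h1

lemma polar_polar_polar (hsymm : SymmRel T) (hirr : IrreflRel T) (B : Set α) :
    polar T (polar T (polar T B)) = polar T B := by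
  apply Set.Subset.antisymm
  · exact polar_anti T (subset_polar_polar T hsymm hirr B)
  · exact subset_polar_polar T hsymm hirr (polar T B)

lemma polar_union (B C : Set α) :
    polar T (B ∪ C) = polar T B ∩ polar T C := by
  ext l
  constructor
  · intro h
    exact ⟨fun l₁ hl₁ => h l₁ (Or.inl hl₁), fun l₁ hl₁ => h l₁ (Or.inr hl₁)⟩
  · rintro ⟨h1, h2⟩ l₁ (hl₁ | hl₁)
    · exact h1 l₁ hl₁
    · exact h2 l₁ hl₁

lemma exists_clique_polar [Fintype α] (hsymm : SymmRel T) (hirr : IrreflRel T)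
    (hsat : SaturatedRel T) {X : Set α} (hX : X ∈ PTup T) :
    ∃ W ∈ PTset T, W ⊆ X ∧ polar T W = polar T X := by
  obtain ⟨U, hU, rfl⟩ := hX
  -- extend U to a maximal clique M
  obtain ⟨M, hM, hmax⟩ :=
    Set.Finite.exists_maximalFor id {M' | M' ∈ PTset T ∧ U ⊆ M'}
      (Set.toFinite _) ⟨U, hU, subset_rfl⟩
  have hMmax : MaxPT T M := by
    refine ⟨hM.1, fun M' hM' hsub => ?_⟩
    exact Set.Subset.antisymm (hmax ⟨hM', hM.2.trans hsub⟩ hsub) hsub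
  have heq : polar T U = polar T (polar T (M \ U)) := hsat M hMmax U hM.2
  refine ⟨M \ U, fun l hl l₁ hl₁ hne => hM.1 l hl.1 l₁ hl₁.1 hne, ?_, ?_⟩
  · rw [heq]
    exact subset_polar_polar T hsymm hirr _
  · rw [heq, polar_polar_polar T hsymm hirr]

end Aux

theorem stmt2 {α : Type*} [Fintype α] [Nonempty α] (T : α → α → Prop)
    (hsymm : SymmRel T) (hirr : IrreflRel T) (hsat : SaturatedRel T) :
    ∀ Q ∈ PTup T, ∀ Q₁ ∈ PTup T, Q₁ ⊆ polar T Q →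
      polar T (polar T (Q ∪ Q₁)) ∈ PTup T := by
  intro Q hQ Q₁ hQ₁ hsub
  obtain ⟨U, hU, hUQ, hUpol⟩ := exists_clique_polar T hsymm hirr hsat hQ
  obtain ⟨U₁, hU₁, hU₁Q, hU₁pol⟩ := exists_clique_polar T hsymm hirr hsat hQ₁
  -- U ∪ U₁ is a clique
  have hV : U ∪ U₁ ∈ PTset T := by
    rintro l (hl | hl) l₁ (hl₁ | hl₁) hne
    · exact hU l hl l₁ hl₁ hne
    · exact (hsub (hU₁Q hl₁)) l (hUQ hl)
    · have h1 : T l₁ l := (hsub (hU₁Q hl)) l₁ (hUQ hl₁)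
      exact (hsymm l l₁ (Ne.symm hne)).mpr h1
    · exact hU₁ l hl l₁ hl₁ hne
  have hpolV : polar T (U ∪ U₁) = polar T (Q ∪ Q₁) := by
    rw [polar_union, polar_union, hUpol, hU₁pol]
  have hmem : polar T (U ∪ U₁) ∈ PTup T := ⟨U ∪ U₁, hV, rfl⟩
  obtain ⟨W, hW, _, hWpol⟩ := exists_clique_polar T hsymm hirr hsat hmem
  exact ⟨W, hW, by rw [hWpol, hpolV]⟩
end

section
/- Let A be a finite nonempty set and T a symmetric, irreflexive, saturated relation on A. Then for every Q ∈ 𝒫^T(A), one has Q ⊆ (Q^T)^T (so Q ⊕ Q^T is defined), (Q ∪ Q^T)^T = ∅, and ((Q ∪ Q^T)^T)^T = A; i.e. Q^T is a complement of Q with respect to the partial operation Q ⊕ Q₁ := ((Q ∪ Q₁)^T)^T with unit A. -/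
theorem stmt5 {α : Type*} [Fintype α] [Nonempty α] (T : α → α → Prop)
    (hsymm : SymmRel T) (hirr : IrreflRel T) (hsat : SaturatedRel T) :
    ∀ Q ∈ PTup T,
      Q ⊆ polar T (polar T Q) ∧
      polar T (Q ∪ polar T Q) = ∅ ∧
      polar T (polar T (Q ∪ polar T Q)) = Set.univ := by
  intro Q _
  have h2 : polar T (Q ∪ polar T Q) = ∅ := by
    ext x
    simp only [Set.mem_empty_iff_false, iff_false]
    intro hx
    have hxp : x ∈ polar T Q := fun l₁ hl₁ => hx l₁ (Or.inl hl₁)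
    exact hirr x (hx x (Or.inr hxp))
  refine ⟨?_, h2, ?_⟩
  · intro q hq m hm
    have hqm : T q m := hm q hq
    have hne : m ≠ q := by
      rintro rfl; exact hirr _ hqm
    exact (hsymm m q hne).mpr hqm
  · rw [h2]
    ext x
    simp only [Set.mem_univ, iff_true]
    intro l₁ hl₁
    exact absurd hl₁ (Set.notMem_empty l₁)
end

section
/- Let A be a finite nonempty set and T a symmetric, irreflexive, saturated relation on A. If Q, Q₁, Q₂ ∈ 𝒫^T(A) satisfy Q₁ ⊆ Q^T, Q₂ ⊆ Q₁^T, and Q ⊆ Q₂^T, then ((Q₁ ∪ Q₂)^T)^T ⊆ Q^T; i.e. the orthoalgebra (𝒫^T(A), ⊕, ∅, A) with Q ⊕ Q₁ := ((Q ∪ Q₁)^T)^T is coherent: whenever Q ⊕ Q₁, Q₁ ⊕ Q₂ and Q₂ ⊕ Q are defined, Q ⊕ (Q₁ ⊕ Q₂) is defined. -/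
theorem stmt7 {α : Type*} [Fintype α] [Nonempty α] (T : α → α → Prop)
    (hsymm : SymmRel T) (hirr : IrreflRel T) (hsat : SaturatedRel T) :
    ∀ Q ∈ PTup T, ∀ Q₁ ∈ PTup T, ∀ Q₂ ∈ PTup T,
      Q₁ ⊆ polar T Q → Q₂ ⊆ polar T Q₁ → Q ⊆ polar T Q₂ →
      polar T (polar T (Q₁ ∪ Q₂)) ⊆ polar T Q := by
  intro Q _ Q₁ _ Q₂ _ h1 _ h3 x hx q hq
  have hQsub : Q ⊆ polar T (Q₁ ∪ Q₂) := by
    intro a ha b hb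
    rcases hb with hb | hb
    · have hTab : T a b := h1 hb a ha
      have hne : a ≠ b := by rintro rfl; exact hirr a hTab
      exact ((hsymm a b hne).mp hTab)
    · exact h3 ha b hb
  exact hx q (hQsub hq)
end

section
/- Let V be a finite set. For S ⊆ V define the map T̂_S on functions φ : V → ZMod 2 by T̂_S(φ) := φ + (∑_{s ∈ S} φ(s)) · 𝟙_{V∖S}, where 𝟙_{V∖S} is the indicator function of the complement of S. Then each T̂_S is a (ZMod 2)-linear involutive automorphism of the vector space of functions V → ZMod 2, and every (ZMod 2)-linear automorphism of this vector space is a finite composition of the maps T̂_S, S ⊆ V; i.e. the maps T̂_S generate the whole general linear group GL(|V|, 𝔽₂). -/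
/-- `T̂_S(φ) := φ + (∑_{s ∈ S} φ s) · 𝟙_{V ∖ S}`, where `𝟙_{V ∖ S}` is the indicator
function of the complement of `S`. -/
def hatT {V : Type*} [Fintype V] [DecidableEq V] (S : Finset V)
    (φ : V → ZMod 2) : V → ZMod 2 :=
  fun v => φ v + (∑ s ∈ S, φ s) * (if v ∈ S then 0 else 1)

section aux
variable {V : Type*} [Fintype V] [DecidableEq V]

lemma hatT_linear (S : Finset V) : IsLinearMap (ZMod 2) (hatT S) := by
  constructor
  · intro φ ψ; funext v
    simp only [hatT, Pi.add_apply, Finset.sum_add_distrib]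
    ring
  · intro c φ; funext v
    simp only [hatT, Pi.smul_apply, smul_eq_mul, ← Finset.mul_sum]
    ring

lemma hatT_invol (S : Finset V) (φ : V → ZMod 2) : hatT S (hatT S φ) = φ := by
  funext v
  have hσ : ∑ s ∈ S, hatT S φ s = ∑ s ∈ S, φ s :=
    Finset.sum_congr rfl fun s hs => by simp [hatT, hs]
  show hatT S φ v + (∑ s ∈ S, hatT S φ s) * (if v ∈ S then 0 else 1) = φ v
  rw [hσ]
  show (φ v + (∑ s ∈ S, φ s) * (if v ∈ S then 0 else 1)) +
    (∑ s ∈ S, φ s) * (if v ∈ S then 0 else 1) = φ v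
  rcases em (v ∈ S) with h | h
  · simp [h]
  · rw [if_neg h, mul_one, add_assoc, CharTwo.add_self_eq_zero, add_zero]

/-- functions expressible as compositions of `hatT`s -/
def Gen (f : (V → ZMod 2) → (V → ZMod 2)) : Prop :=
  ∃ L : List (Finset V), f = L.foldr (fun S g => hatT S ∘ g) id

lemma foldr_comp (L : List (Finset V)) (g : (V → ZMod 2) → (V → ZMod 2)) :
    L.foldr (fun S g => hatT S ∘ g) g = (L.foldr (fun S g => hatT S ∘ g) id) ∘ g := by
  induction L with
  | nil => rfl
  | cons S L ih => simp only [List.foldr_cons, ih]; rfl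

lemma Gen.comp {f g : (V → ZMod 2) → (V → ZMod 2)} (hf : Gen f) (hg : Gen g) :
    Gen (f ∘ g) := by
  obtain ⟨L1, rfl⟩ := hf
  obtain ⟨L2, rfl⟩ := hg
  exact ⟨L1 ++ L2, by
    rw [List.foldr_append, foldr_comp L1 (List.foldr (fun S g => hatT S ∘ g) id L2)]⟩

lemma Gen.id : Gen (id : (V → ZMod 2) → (V → ZMod 2)) := ⟨[], rfl⟩

lemma Gen.single (S : Finset V) : Gen (hatT S) := ⟨[S], rfl⟩

lemma hatT_word (i j : V) (hij : i ≠ j) (φ : V → ZMod 2) :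
    hatT {i, j} (hatT {j} (hatT {i, j} φ)) =
      fun v => φ v + (if v = i then φ j else 0) := by
  funext v
  have hmemi : i ∈ ({i, j} : Finset V) := by simp
  have hmemj : j ∈ ({i, j} : Finset V) := by simp
  simp only [hatT, Finset.sum_pair hij, Finset.sum_singleton, hmemi, hmemj,
    Finset.mem_singleton, if_true, mul_zero, add_zero, hij, if_false, mul_one]
  rcases eq_or_ne v i with rfl | hvi
  · simp only [hmemi, if_true, mul_zero, add_zero, if_pos rfl, if_neg hij]
    generalize φ v = a
    generalize φ j = b
    revert a b; decide
  · rcases eq_or_ne v j with rfl | hvj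
    · simp only [hmemj, if_true, mul_zero, add_zero, if_neg hvi]
    · have hv : v ∉ ({i, j} : Finset V) := by simp [hvi, hvj]
      simp only [hv, if_false, mul_one, if_neg hvi, if_neg hvj]
      generalize φ v = c
      generalize φ i = a
      generalize φ j = b
      revert a b c; decide

lemma gen_transvection (t : Matrix.TransvectionStruct V (ZMod 2)) :
    Gen (t.toMatrix.mulVec) := by
  obtain ⟨i, j, hij, c⟩ := t
  have hc : c = 0 ∨ c = 1 := by revert c; decide
  rcases hc with rfl | rfl
  · have h0 : (⟨i, j, hij, 0⟩ : Matrix.TransvectionStruct V (ZMod 2)).toMatrix = 1 := by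
      simp [Matrix.TransvectionStruct.toMatrix, Matrix.transvection]
    have h1 : (1 : Matrix V V (ZMod 2)).mulVec = id :=
      funext fun φ => Matrix.one_mulVec φ
    rw [h0, h1]
    exact Gen.id
  · refine ⟨[{i, j}, {j}, {i, j}], ?_⟩
    funext φ
    simp only [Matrix.TransvectionStruct.toMatrix, Matrix.transvection,
      Matrix.add_mulVec, Matrix.one_mulVec, Matrix.single_mulVec,
      List.foldr_cons, List.foldr_nil, Function.comp_apply, id_eq]
    rw [hatT_word i j hij]
    funext v
    rcases eq_or_ne v i with rfl | hvi
    · simp [Function.update]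
    · simp [Function.update, hvi]

end aux

theorem stmt9 {V : Type*} [Fintype V] [DecidableEq V] :
    (∀ S : Finset V,
      IsLinearMap (ZMod 2) (hatT S) ∧ hatT S ∘ hatT S = id ∧
        Function.Bijective (hatT S)) ∧
    (∀ e : (V → ZMod 2) ≃ₗ[ZMod 2] (V → ZMod 2),
      ∃ L : List (Finset V), ⇑e = L.foldr (fun S g => hatT S ∘ g) id) := by
  constructor
  · intro S
    have hinv : Function.Involutive (hatT S) := hatT_invol S
    exact ⟨hatT_linear S, funext fun φ => hatT_invol S φ, hinv.bijective⟩
  · intro e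
    set M : Matrix V V (ZMod 2) := LinearMap.toMatrix' e.toLinearMap with hM
    have hMN : M * LinearMap.toMatrix' e.symm.toLinearMap = 1 := by
      rw [hM, ← LinearMap.toMatrix'_comp]
      have : e.toLinearMap.comp e.symm.toLinearMap = LinearMap.id := by
        ext φ; simp
      rw [this, LinearMap.toMatrix'_id]
    have hdet : M.det ≠ 0 := by
      intro h
      have := congrArg Matrix.det hMN
      rw [Matrix.det_mul, h, zero_mul, Matrix.det_one] at this
      exact zero_ne_one this
    have key : Gen (M.mulVec) := by
      apply Matrix.diagonal_transvection_induction_of_det_ne_zero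
        (fun A => Gen A.mulVec) M hdet
      · intro D hD
        have hD1 : ∀ v, D v = 1 := by
          intro v
          have hv : D v ≠ 0 := by
            intro h0
            apply hD
            rw [Matrix.det_diagonal]
            exact Finset.prod_eq_zero (Finset.mem_univ v) h0
          have h01 : ∀ x : ZMod 2, x ≠ 0 → x = 1 := by decide
          exact h01 _ hv
        have : Matrix.diagonal D = 1 := by
          funext v w
          rcases eq_or_ne v w with rfl | hvw
          · simp [Matrix.diagonal, hD1]
          · simp [Matrix.diagonal, hvw, Matrix.one_apply_ne hvw]
        rw [this]
        have : (1 : Matrix V V (ZMod 2)).mulVec = id := by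
          funext φ; simp [Matrix.one_mulVec]
        rw [this]
        exact Gen.id
      · exact gen_transvection
      · intro A B _ _ hA hB
        have : (A * B).mulVec = A.mulVec ∘ B.mulVec := by
          funext φ; simp [Matrix.mulVec_mulVec]
        rw [this]; exact hA.comp hB
    obtain ⟨L, hL⟩ := key
    refine ⟨L, ?_⟩
    rw [← hL]
    funext φ
    have : M.mulVec φ = Matrix.toLin' M φ := by simp [Matrix.toLin'_apply]
    rw [this, hM, Matrix.toLin'_toMatrix']
    rfl
end

section
/- Let V be a finite set and for S ⊆ V define T_S : 𝒫(V) → 𝒫(V) by T_S(U) := U if |U ∩ S| is even, and T_S(U) := V ∖ (U Δ S) if |U ∩ S| is odd (Δ denotes symmetric difference). Then for all S, U, U₁ ⊆ V: (i) S ∩ T_S(U) = S ∩ U; (ii) T_S(T_S(U)) = U, i.e. T_S is an involution; (iii) T_S(U Δ U₁) = T_S(U) Δ T_S(U₁). -/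
open scoped symmDiff

/-- `T_S(U) := U` if `|U ∩ S|` is even, and `T_S(U) := V ∖ (U Δ S)` if `|U ∩ S|` is odd. -/
def TSmap {V : Type*} [Fintype V] [DecidableEq V] (S U : Finset V) : Finset V :=
  if Even (U ∩ S).card then U else (U ∆ S)ᶜ

lemma card_symmDiff_aux {V : Type*} [DecidableEq V] (A B : Finset V) :
    (A ∆ B).card + 2 * (A ∩ B).card = A.card + B.card := by
  have h1 : (A ∆ B).card = (A \ B).card + (B \ A).card := by
    rw [symmDiff_def, Finset.sup_eq_union, Finset.card_union_of_disjoint]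
    exact disjoint_sdiff_sdiff
  have h2 : (A ∩ B).card + (A \ B).card = A.card := Finset.card_inter_add_card_sdiff A B
  have h3 : (B ∩ A).card + (B \ A).card = B.card := Finset.card_inter_add_card_sdiff B A
  rw [Finset.inter_comm B A] at h3
  omega

lemma even_card_symmDiff {V : Type*} [DecidableEq V] (A B : Finset V) :
    Even (A ∆ B).card ↔ (Even A.card ↔ Even B.card) := by
  have h := card_symmDiff_aux A B
  have h2 : Even (A ∆ B).card ↔ Even (A.card + B.card) := by
    rw [← h, Nat.even_add]
    simp
  rw [h2, Nat.even_add]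

theorem stmt10 {V : Type*} [Fintype V] [DecidableEq V] :
    ∀ S U U₁ : Finset V,
      S ∩ TSmap S U = S ∩ U ∧
      TSmap S (TSmap S U) = U ∧
      TSmap S (U ∆ U₁) = TSmap S U ∆ TSmap S U₁ := by
  have hinter : ∀ S U : Finset V, S ∩ (U ∆ S)ᶜ = S ∩ U := by
    intro S U; ext x
    simp only [Finset.mem_inter, Finset.mem_compl, Finset.mem_symmDiff]
    tauto
  have hpart1 : ∀ S U : Finset V, S ∩ TSmap S U = S ∩ U := by
    intro S U
    unfold TSmap
    split
    · rfl
    · exact hinter S U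
  have hcard : ∀ S U : Finset V, (TSmap S U ∩ S).card = (U ∩ S).card := by
    intro S U
    rw [Finset.inter_comm, hpart1, Finset.inter_comm]
  intro S U U₁
  refine ⟨hpart1 S U, ?_, ?_⟩
  · by_cases h : Even ((U ∩ S).card)
    · simp [TSmap, h]
    · have h2 : ¬ Even ((TSmap S U ∩ S).card) := by rw [hcard]; exact h
      rw [show TSmap S (TSmap S U) = (TSmap S U ∆ S)ᶜ from if_neg h2,
        show TSmap S U = (U ∆ S)ᶜ from if_neg h]
      clear hinter hpart1 hcard h2 h
      ext x
      simp only [Finset.mem_compl, Finset.mem_symmDiff]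
      tauto
  · have hp : Even (((U ∆ U₁) ∩ S).card) ↔
        (Even ((U ∩ S).card) ↔ Even ((U₁ ∩ S).card)) := by
      have he : (U ∆ U₁) ∩ S = (U ∩ S) ∆ (U₁ ∩ S) := by
        ext x
        simp only [Finset.mem_inter, Finset.mem_symmDiff]
        tauto
      rw [he]; exact even_card_symmDiff _ _
    by_cases h1 : Even ((U ∩ S).card) <;> by_cases h2 : Even ((U₁ ∩ S).card)
    · have h3 : Even (((U ∆ U₁) ∩ S).card) := hp.mpr (by tauto)
      rw [show TSmap S (U ∆ U₁) = U ∆ U₁ from if_pos h3,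
        show TSmap S U = U from if_pos h1, show TSmap S U₁ = U₁ from if_pos h2]
    · have h3 : ¬ Even (((U ∆ U₁) ∩ S).card) := fun h => h2 ((hp.mp h).mp h1)
      rw [show TSmap S (U ∆ U₁) = ((U ∆ U₁) ∆ S)ᶜ from if_neg h3,
        show TSmap S U = U from if_pos h1, show TSmap S U₁ = (U₁ ∆ S)ᶜ from if_neg h2]
      clear hinter hpart1 hcard hp h1 h2 h3
      ext x
      simp only [Finset.mem_compl, Finset.mem_symmDiff]
      tauto
    · have h3 : ¬ Even (((U ∆ U₁) ∩ S).card) := fun h => h1 ((hp.mp h).mpr h2)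
      rw [show TSmap S (U ∆ U₁) = ((U ∆ U₁) ∆ S)ᶜ from if_neg h3,
        show TSmap S U = (U ∆ S)ᶜ from if_neg h1, show TSmap S U₁ = U₁ from if_pos h2]
      clear hinter hpart1 hcard hp h1 h2 h3
      ext x
      simp only [Finset.mem_compl, Finset.mem_symmDiff]
      tauto
    · have h3 : Even (((U ∆ U₁) ∩ S).card) := hp.mpr (by tauto)
      simp only [TSmap, if_pos h3, if_neg h1, if_neg h2]
      clear hinter hpart1 hcard hp h1 h2 h3
      ext x
      simp only [Finset.mem_compl, Finset.mem_symmDiff]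
      tauto
end

section
/- Let V be a finite set. For S ⊆ V define θ_S on functions φ : V → ZMod 2 by θ_S(φ)(v) := φ(v) if v ∉ S and θ_S(φ)(v) := φ(v) + ∑_{w ∈ V∖S} φ(w) if v ∈ S. Then θ_S ∘ θ_S = id, and for every U ⊆ V and every φ : V → ZMod 2 one has ∑_{v ∈ T_S(U)} θ_S(φ)(v) = ∑_{v ∈ U} φ(v), where T_S(U) := U if |U ∩ S| is even and T_S(U) := V ∖ (U Δ S) if |U ∩ S| is odd. In particular, if ∑_{v ∈ U} φ(v) = 0 then ∑_{v ∈ T_S(U)} θ_S(φ)(v) = 0. -/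
open scoped symmDiff

/-- `θ_S(φ)(v) := φ(v)` if `v ∉ S` and `θ_S(φ)(v) := φ(v) + ∑_{w ∈ V ∖ S} φ(w)` if `v ∈ S`. -/
def thetaS {V : Type*} [Fintype V] [DecidableEq V] (S : Finset V)
    (φ : V → ZMod 2) : V → ZMod 2 :=
  fun v => if v ∈ S then φ v + ∑ w ∈ Sᶜ, φ w else φ v

lemma theta_compl_sum {V : Type*} [Fintype V] [DecidableEq V] (S : Finset V)
    (φ : V → ZMod 2) : ∑ w ∈ Sᶜ, thetaS S φ w = ∑ w ∈ Sᶜ, φ w := by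
  refine Finset.sum_congr rfl fun w hw => ?_
  simp only [Finset.mem_compl] at hw
  simp [thetaS, hw]

lemma theta_sum {V : Type*} [Fintype V] [DecidableEq V] (S T : Finset V)
    (φ : V → ZMod 2) :
    ∑ v ∈ T, thetaS S φ v = ∑ v ∈ T, φ v + ((T ∩ S).card : ZMod 2) * ∑ w ∈ Sᶜ, φ w := by
  have : ∀ v, thetaS S φ v = φ v + if v ∈ S then ∑ w ∈ Sᶜ, φ w else 0 := by
    intro v; simp [thetaS]; split <;> simp
  simp only [this, Finset.sum_add_distrib]
  congr 1
  rw [Finset.sum_ite_mem, Finset.sum_const, nsmul_eq_mul]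

theorem stmt11 {V : Type*} [Fintype V] [DecidableEq V] :
    ∀ S : Finset V,
      thetaS S ∘ thetaS S = id ∧
      ∀ (U : Finset V) (φ : V → ZMod 2),
        (∑ v ∈ TSmap S U, thetaS S φ v = ∑ v ∈ U, φ v) ∧
        (∑ v ∈ U, φ v = 0 → ∑ v ∈ TSmap S U, thetaS S φ v = 0) := by
  intro S
  have key : ∀ (U : Finset V) (φ : V → ZMod 2),
      ∑ v ∈ TSmap S U, thetaS S φ v = ∑ v ∈ U, φ v := by
    intro U φ
    by_cases h : Even (U ∩ S).card
    · rw [TSmap, if_pos h, theta_sum]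
      have h0 : ((U ∩ S).card : ZMod 2) = 0 :=
        (ZMod.natCast_eq_zero_iff _ 2).mpr (even_iff_two_dvd.mp h)
      rw [h0, zero_mul, add_zero]
    · rw [TSmap, if_neg h, theta_sum]
      have hcap : (U ∆ S)ᶜ ∩ S = U ∩ S := by
        ext v
        simp only [Finset.mem_compl, Finset.mem_symmDiff, Finset.mem_inter]
        tauto
      have hcard : (((U ∆ S)ᶜ ∩ S).card : ZMod 2) = 1 := by
        rw [hcap]
        obtain ⟨k, hk⟩ := Nat.not_even_iff_odd.mp h
        rw [hk]
        push_cast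
        rw [show ((2:ZMod 2)) = 0 from rfl]
        ring
      rw [hcard, one_mul]
      -- now: ∑_{(U∆S)ᶜ} φ + ∑_{Sᶜ} φ = ∑_U φ
      have e1 : ∑ v ∈ (U ∆ S)ᶜ, φ v = ∑ v, φ v - ∑ v ∈ U ∆ S, φ v := by
        rw [eq_sub_iff_add_eq, Finset.sum_compl_add_sum]
      have e2 : ∑ v ∈ Sᶜ, φ v = ∑ v, φ v - ∑ v ∈ S, φ v := by
        rw [eq_sub_iff_add_eq, Finset.sum_compl_add_sum]
      have e3 : ∑ v ∈ U ∆ S, φ v + ∑ v ∈ U ∩ S, φ v + ∑ v ∈ U ∩ S, φ v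
          = ∑ v ∈ U, φ v + ∑ v ∈ S, φ v := by
        have hU := Finset.sum_inter_add_sum_sdiff U S φ
        have hS := Finset.sum_inter_add_sum_sdiff S U φ
        have hsd : ∑ v ∈ U ∆ S, φ v = ∑ v ∈ U \ S, φ v + ∑ v ∈ S \ U, φ v := by
          rw [symmDiff_def, Finset.sup_eq_union, Finset.sum_union]
          exact disjoint_sdiff_sdiff
        rw [hsd, ← hU, ← hS, Finset.inter_comm S U]
        ring
      rw [e1, e2]
      have c2 : (2 : ZMod 2) = 0 := rfl
      linear_combination -e3 + (∑ v, φ v + ∑ v ∈ U ∩ S, φ v - ∑ v ∈ U, φ v - ∑ v ∈ S, φ v) * c2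
  refine ⟨?_, fun U φ => ⟨key U φ, fun h => by rw [key U φ, h]⟩⟩
  funext φ v
  have hc := theta_compl_sum S φ
  simp only [Function.comp_apply, id_eq]
  by_cases hv : v ∈ S
  · simp only [thetaS, if_pos hv]
    have : ∑ w ∈ Sᶜ, (fun v => if v ∈ S then φ v + ∑ w ∈ Sᶜ, φ w else φ v) w
        = ∑ w ∈ Sᶜ, φ w := hc
    rw [this]
    have : (∑ w ∈ Sᶜ, φ w) + ∑ w ∈ Sᶜ, φ w = 0 := CharTwo.add_self_eq_zero _
    linear_combination this
  · simp only [thetaS, if_neg hv]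
end

section
/- Let V be a finite set with N := |V| divisible by 4, and let b, c : ZMod 4 → ZMod 2 satisfy c(0) + c(2) = b(0) + b(2) and c(1) + c(3) = b(1) + b(3). For U, U₁ ⊆ V put b_U := b(|U| mod 4), c_{U,U₁} := c(|U Δ U₁| mod 4) for U ≠ U₁ and c_{U,U} := 0, and for S ⊆ V put c^{(S)}_{U,U₁} := c_{U,U₁} + b_U + b_{U₁} + c_{T_S(U),T_S(U₁)} + b_{T_S(U)} + b_{T_S(U₁)} and b^{(S)}_U := b_U + b_{T_S(U)}, where T_S(U) := U if |U ∩ S| is even and T_S(U) := V ∖ (U Δ S) if |U ∩ S| is odd. Then for all S, Q, Q₁ ⊆ V with Q ≠ Q₁: (i) c^{(S)}_{Q,Q₁} + ∑_{z₁ ∈ Q₁} c^{(S)}_{Q,{z₁}} + ∑_{z ∈ Q} c^{(S)}_{{z},Q₁} + ∑_{z ∈ Q, z₁ ∈ Q₁, z ≠ z₁} c^{(S)}_{{z},{z₁}} = 0; and (ii) for all S, Q ⊆ V: ∑_{z ∈ Q} c^{(S)}_{Q,{z}} + ∑_{two-element subsets {z,z'} ⊆ Q} c^{(S)}_{{z},{z'}}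 = b^{(S)}_Q + ∑_{z ∈ Q} b^{(S)}_{{z}} (the sum over two-element subsets is well defined since c^{(S)} is symmetric in its two arguments). -/
open scoped symmDiff

/-- `b_U := b(|U| mod 4)`. -/
def bU {V : Type*} [DecidableEq V] (b : ZMod 4 → ZMod 2) (U : Finset V) : ZMod 2 :=
  b (U.card : ZMod 4)

/-- `c_{U,U₁} := c(|U Δ U₁| mod 4)` for `U ≠ U₁`, and `c_{U,U} := 0`. -/
def cUU {V : Type*} [DecidableEq V] (c : ZMod 4 → ZMod 2) (U U₁ : Finset V) : ZMod 2 :=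
  if U = U₁ then 0 else c (((U ∆ U₁).card : ZMod 4))

/-- `c^{(S)}_{U,U₁} := c_{U,U₁} + b_U + b_{U₁} + c_{T_S(U),T_S(U₁)} + b_{T_S(U)} + b_{T_S(U₁)}`. -/
def cS {V : Type*} [Fintype V] [DecidableEq V] (b c : ZMod 4 → ZMod 2)
    (S U U₁ : Finset V) : ZMod 2 :=
  cUU c U U₁ + bU b U + bU b U₁ + cUU c (TSmap S U) (TSmap S U₁) +
    bU b (TSmap S U) + bU b (TSmap S U₁)

/-- `b^{(S)}_U := b_U + b_{T_S(U)}`. -/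
def bS {V : Type*} [Fintype V] [DecidableEq V] (b : ZMod 4 → ZMod 2)
    (S U : Finset V) : ZMod 2 :=
  bU b U + bU b (TSmap S U)

set_option linter.unusedSectionVars false
set_option linter.unusedVariables false
set_option linter.unnecessarySeqFocus false

section Aux

variable {V : Type*} [Fintype V] [DecidableEq V]

lemma nat_card_symmDiff (A B : Finset V) :
    (A ∆ B).card + 2 * (A ∩ B).card = A.card + B.card := by
  have h1 : (A ∆ B) = (A ∪ B) \ (A ∩ B) := by
    rw [symmDiff_eq_sup_sdiff_inf]; rfl
  have h2 : (A ∩ B) ⊆ (A ∪ B) := Finset.inter_subset_union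
  have h3 := Finset.card_sdiff_of_subset h2
  have h4 := Finset.card_union_add_card_inter A B
  have h5 := Finset.card_le_card h2
  rw [h1, h3]
  omega

lemma four_eq_zero : (4 : ZMod 4) = 0 := by decide
lemma two_eq_zero2 : (2 : ZMod 2) = 0 := by decide

lemma zmod4_card_symmDiff (A B : Finset V) :
    (((A ∆ B).card : ℕ) : ZMod 4) = (A.card : ZMod 4) + B.card + 2 * (A ∩ B).card := by
  have h := nat_card_symmDiff A B
  have h2 : (((A ∆ B).card + 2 * (A ∩ B).card : ℕ) : ZMod 4) = ((A.card + B.card : ℕ) : ZMod 4) := by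
    rw [h]
  push_cast at h2
  linear_combination h2 - ((A ∩ B).card : ZMod 4) * four_eq_zero

lemma zmod2_card_symmDiff (A B : Finset V) :
    (((A ∆ B).card : ℕ) : ZMod 2) = (A.card : ZMod 2) + B.card := by
  have h := nat_card_symmDiff A B
  have h2 : (((A ∆ B).card + 2 * (A ∩ B).card : ℕ) : ZMod 2) = ((A.card + B.card : ℕ) : ZMod 2) := by
    rw [h]
  push_cast at h2
  linear_combination h2 - ((A ∩ B).card : ZMod 2) * two_eq_zero2

lemma inter_symmDiff_right (A B S : Finset V) : (A ∆ B) ∩ S = (A ∩ S) ∆ (B ∩ S) := by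
  ext x
  simp only [Finset.mem_inter, Finset.mem_symmDiff]
  tauto

lemma even_inter_symmDiff (A B S : Finset V) :
    Even (((A ∆ B) ∩ S).card) ↔ (Even ((A ∩ S).card) ↔ Even ((B ∩ S).card)) := by
  rw [inter_symmDiff_right]
  have h := nat_card_symmDiff (A ∩ S) (B ∩ S)
  rw [Nat.even_iff, Nat.even_iff, Nat.even_iff]
  omega

lemma zmod2_even {n : ℕ} (h : Even n) : ((n : ℕ) : ZMod 2) = 0 := by
  obtain ⟨k, rfl⟩ := h
  push_cast
  linear_combination (k : ZMod 2) * two_eq_zero2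

lemma zmod2_odd {n : ℕ} (h : ¬ Even n) : ((n : ℕ) : ZMod 2) = 1 := by
  obtain ⟨k, rfl⟩ := Nat.not_even_iff_odd.mp h
  push_cast
  linear_combination (k : ZMod 2) * two_eq_zero2

lemma zmod4_card_compl (h4 : 4 ∣ Fintype.card V) (X : Finset V) :
    ((Xᶜ.card : ℕ) : ZMod 4) = - (X.card : ZMod 4) := by
  have hle : X.card ≤ Fintype.card V := by
    simpa using Finset.card_le_univ X
  rw [Finset.card_compl, Nat.cast_sub hle, (ZMod.natCast_eq_zero_iff _ _).mpr h4]
  ring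

lemma key_compl_card (h4 : 4 ∣ Fintype.card V) (D S : Finset V)
    (h : ¬ Even ((D ∩ S).card)) :
    ((((D ∆ S)ᶜ).card : ℕ) : ZMod 4) = 2 - (S.card : ZMod 4) - (D.card : ZMod 4) := by
  rw [zmod4_card_compl h4, zmod4_card_symmDiff]
  obtain ⟨k, hk⟩ := Nat.not_even_iff_odd.mp h
  rw [hk]
  push_cast
  linear_combination (- (k : ZMod 4) - 1) * four_eq_zero

lemma TSmap_even {S U : Finset V} (h : Even ((U ∩ S).card)) : TSmap S U = U := if_pos h

lemma TSmap_odd {S U : Finset V} (h : ¬ Even ((U ∩ S).card)) : TSmap S U = (U ∆ S)ᶜ := if_neg h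

lemma TS_ne_mixed {S U U₁ : Finset V} (hU : Even ((U ∩ S).card))
    (hU₁ : ¬ Even ((U₁ ∩ S).card)) : U ≠ (U₁ ∆ S)ᶜ := by
  intro he
  apply hU₁
  have hcs : (U₁ ∆ S)ᶜ ∩ S = U₁ ∩ S := by
    ext x
    simp only [Finset.mem_inter, Finset.mem_compl, Finset.mem_symmDiff]
    tauto
  rw [he, hcs] at hU
  exact hU

end Aux

section Eqs

variable {V : Type*} [Fintype V] [DecidableEq V]

lemma bS_eq (h4 : 4 ∣ Fintype.card V) (b : ZMod 4 → ZMod 2) (S U : Finset V) :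
    bS b S U = ((U ∩ S).card : ZMod 2) *
      (b (U.card : ZMod 4) + b (2 - (S.card : ZMod 4) - (U.card : ZMod 4))) := by
  by_cases h : Even ((U ∩ S).card)
  · rw [bS, TSmap_even h, zmod2_even h]
    unfold bU
    ring_nf
    try reduce_mod_char
  · rw [bS, TSmap_odd h, zmod2_odd h, one_mul]
    unfold bU
    rw [key_compl_card h4 U S h]

set_option maxHeartbeats 1600000 in
lemma cS_eq (h4 : 4 ∣ Fintype.card V) (b c : ZMod 4 → ZMod 2) (S U U₁ : Finset V) :
    cS b c S U U₁ =
      ((U ∩ S).card : ZMod 2) *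
        (b (U.card : ZMod 4) + b (2 - (S.card : ZMod 4) - (U.card : ZMod 4))) +
      ((U₁ ∩ S).card : ZMod 2) *
        (b (U₁.card : ZMod 4) + b (2 - (S.card : ZMod 4) - (U₁.card : ZMod 4))) +
      (((U ∩ S).card : ZMod 2) + ((U₁ ∩ S).card : ZMod 2)) *
        (c ((U ∆ U₁).card : ZMod 4) +
         c (2 - (S.card : ZMod 4) - ((U ∆ U₁).card : ZMod 4))) := by
  have hbs : cS b c S U U₁ = bS b S U + bS b S U₁ +
      (cUU c U U₁ + cUU c (TSmap S U) (TSmap S U₁)) := by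
    unfold cS bS
    ring
  rw [hbs, bS_eq h4 b S U, bS_eq h4 b S U₁]
  have hmain : cUU c U U₁ + cUU c (TSmap S U) (TSmap S U₁) =
      (((U ∩ S).card : ZMod 2) + ((U₁ ∩ S).card : ZMod 2)) *
        (c ((U ∆ U₁).card : ZMod 4) +
         c (2 - (S.card : ZMod 4) - ((U ∆ U₁).card : ZMod 4))) := by
    by_cases hU : Even ((U ∩ S).card) <;> by_cases hU₁ : Even ((U₁ ∩ S).card)
    · rw [TSmap_even hU, TSmap_even hU₁, zmod2_even hU, zmod2_even hU₁]
      ring_nf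
      try reduce_mod_char
    · -- U even, U₁ odd
      have hodd : ¬ Even (((U ∆ U₁) ∩ S).card) := by
        rw [even_inter_symmDiff]
        simp [hU, hU₁]
      have hne : U ≠ U₁ := fun he => hU₁ (he ▸ hU)
      have hne2 : U ≠ (U₁ ∆ S)ᶜ := TS_ne_mixed hU hU₁
      rw [TSmap_even hU, TSmap_odd hU₁, zmod2_even hU, zmod2_odd hU₁]
      rw [cUU, if_neg hne, cUU, if_neg hne2]
      have hd : U ∆ (U₁ ∆ S)ᶜ = ((U ∆ U₁) ∆ S)ᶜ := by
        ext x
        simp only [Finset.mem_symmDiff, Finset.mem_compl]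
        tauto
      rw [hd, key_compl_card h4 (U ∆ U₁) S hodd]
      ring_nf
      try reduce_mod_char
    · -- U odd, U₁ even
      have hodd : ¬ Even (((U ∆ U₁) ∩ S).card) := by
        rw [even_inter_symmDiff]
        simp [hU, hU₁]
      have hne : U ≠ U₁ := fun he => hU (he ▸ hU₁)
      have hne2 : (U ∆ S)ᶜ ≠ U₁ := fun h => (TS_ne_mixed hU₁ hU) h.symm
      rw [TSmap_odd hU, TSmap_even hU₁, zmod2_odd hU, zmod2_even hU₁]
      rw [cUU, if_neg hne, cUU, if_neg hne2]
      have hd : (U ∆ S)ᶜ ∆ U₁ = ((U ∆ U₁) ∆ S)ᶜ := by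
        ext x
        simp only [Finset.mem_symmDiff, Finset.mem_compl]
        tauto
      rw [hd, key_compl_card h4 (U ∆ U₁) S hodd]
      ring_nf
      try reduce_mod_char
    · -- both odd
      rw [TSmap_odd hU, TSmap_odd hU₁, zmod2_odd hU, zmod2_odd hU₁]
      by_cases he : U = U₁
      · subst he
        rw [cUU, if_pos rfl, cUU, if_pos rfl]
        ring_nf
        try reduce_mod_char
      · have hne2 : (U ∆ S)ᶜ ≠ (U₁ ∆ S)ᶜ := by
          intro h
          apply he
          ext x
          have hx := Finset.ext_iff.mp h x
          simp only [Finset.mem_compl, Finset.mem_symmDiff, not_iff_not] at hx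
          by_cases hxS : x ∈ S <;> tauto
        rw [cUU, if_neg he, cUU, if_neg hne2]
        have hd : (U ∆ S)ᶜ ∆ (U₁ ∆ S)ᶜ = U ∆ U₁ := by
          rw [compl_symmDiff_compl]
          ext x
          simp only [Finset.mem_symmDiff]
          tauto
        rw [hd]
        ring_nf
        try reduce_mod_char
  rw [hmain]

end Eqs

section Sums

variable {V : Type*} [Fintype V] [DecidableEq V]

lemma sum_split1 (P A : Finset V) (g : V → ZMod 2) (t0 tA : ZMod 2)
    (h : ∀ z ∈ P, g z = t0 + (if z ∈ A then tA else 0)) :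
    ∑ z ∈ P, g z = (P.card : ZMod 2) * t0 + ((P ∩ A).card : ZMod 2) * tA := by
  rw [Finset.sum_congr rfl h, Finset.sum_add_distrib, Finset.sum_const,
    Finset.sum_ite_mem, Finset.sum_const, nsmul_eq_mul, nsmul_eq_mul]

lemma sum_split (P A B : Finset V) (g : V → ZMod 2) (t0 tA tB tAB : ZMod 2)
    (h : ∀ z ∈ P, g z = t0 + (if z ∈ A then tA else 0) + (if z ∈ B then tB else 0)
      + (if z ∈ A ∩ B then tAB else 0)) :
    ∑ z ∈ P, g z = (P.card : ZMod 2) * t0 + ((P ∩ A).card : ZMod 2) * tA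
      + ((P ∩ B).card : ZMod 2) * tB + ((P ∩ (A ∩ B)).card : ZMod 2) * tAB := by
  rw [Finset.sum_congr rfl h, Finset.sum_add_distrib, Finset.sum_add_distrib,
    Finset.sum_add_distrib, Finset.sum_const,
    Finset.sum_ite_mem, Finset.sum_ite_mem, Finset.sum_ite_mem,
    Finset.sum_const, Finset.sum_const, Finset.sum_const,
    nsmul_eq_mul, nsmul_eq_mul, nsmul_eq_mul, nsmul_eq_mul]

lemma zmod2_singleton_inter (z : V) (S : Finset V) :
    (((({z} : Finset V) ∩ S).card : ℕ) : ZMod 2) = if z ∈ S then 1 else 0 := by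
  by_cases h : z ∈ S
  · rw [Finset.singleton_inter_of_mem h, if_pos h, Finset.card_singleton, Nat.cast_one]
  · rw [Finset.singleton_inter_of_notMem h, if_neg h, Finset.card_empty, Nat.cast_zero]

lemma symmDiff_singleton_mem {z : V} {Q : Finset V} (h : z ∈ Q) : Q ∆ {z} = Q.erase z := by
  ext x
  simp only [Finset.mem_symmDiff, Finset.mem_singleton, Finset.mem_erase]
  constructor
  · rintro (⟨hq, hz⟩ | ⟨rfl, hq⟩)
    · exact ⟨hz, hq⟩
    · exact absurd h hq
  · rintro ⟨hne, hq⟩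
    exact Or.inl ⟨hq, hne⟩

lemma symmDiff_singleton_not_mem {z : V} {Q : Finset V} (h : z ∉ Q) :
    Q ∆ {z} = insert z Q := by
  ext x
  simp only [Finset.mem_symmDiff, Finset.mem_singleton, Finset.mem_insert]
  constructor
  · rintro (⟨hq, hz⟩ | ⟨rfl, hq⟩)
    · exact Or.inr hq
    · exact Or.inl rfl
  · rintro (rfl | hq)
    · exact Or.inr ⟨rfl, h⟩
    · exact Or.inl ⟨hq, fun he => h (he ▸ hq)⟩

lemma zmod4_card_erase_mem {z : V} {Q : Finset V} (h : z ∈ Q) :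
    (((Q.erase z).card : ℕ) : ZMod 4) = (Q.card : ZMod 4) + 3 := by
  rw [Finset.card_erase_of_mem h, Nat.cast_sub (Finset.one_le_card.mpr ⟨z, h⟩)]
  push_cast
  linear_combination (-1 : ZMod 4) * four_eq_zero

lemma zmod4_card_insert_notMem {z : V} {Q : Finset V} (h : z ∉ Q) :
    (((insert z Q).card : ℕ) : ZMod 4) = (Q.card : ZMod 4) + 1 := by
  rw [Finset.card_insert_of_notMem h]
  push_cast
  ring

lemma zmod2_card_erase (z : V) (X : Finset V) :
    (((X.erase z).card : ℕ) : ZMod 2) = (X.card : ZMod 2) + (if z ∈ X then 1 else 0) := by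
  by_cases h : z ∈ X
  · rw [Finset.card_erase_of_mem h, if_pos h, Nat.cast_sub (Finset.one_le_card.mpr ⟨z, h⟩)]
    push_cast
    linear_combination (-1 : ZMod 2) * two_eq_zero2
  · rw [Finset.erase_eq_of_notMem h, if_neg h, add_zero]

lemma erase_inter' (z : V) (X S : Finset V) : (X.erase z) ∩ S = (X ∩ S).erase z := by
  ext x
  simp only [Finset.mem_inter, Finset.mem_erase]
  tauto

lemma zmod4_card_singleton_symmDiff {z z' : V} (h : z ≠ z') :
    (((({z} : Finset V) ∆ {z'}).card : ℕ) : ZMod 4) = 2 := by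
  have he : (({z} : Finset V) ∆ {z'}) = {z, z'} := by
    ext x
    simp only [Finset.mem_symmDiff, Finset.mem_singleton, Finset.mem_insert]
    constructor
    · rintro (⟨rfl, _⟩ | ⟨rfl, _⟩)
      · exact Or.inl rfl
      · exact Or.inr rfl
    · rintro (rfl | rfl)
      · exact Or.inl ⟨rfl, h⟩
      · exact Or.inr ⟨rfl, fun hc => h hc.symm⟩
  rw [he, Finset.card_insert_of_notMem (by simpa using h), Finset.card_singleton]
  norm_num

end Sums

section SumEval

variable {V : Type*} [Fintype V] [DecidableEq V]

set_option maxHeartbeats 1600000 in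
lemma sumT2 (h4 : 4 ∣ Fintype.card V) (b c : ZMod 4 → ZMod 2) (S Q P : Finset V) :
    ∑ z ∈ P, cS b c S Q {z} =
      (P.card : ZMod 2) * (((Q ∩ S).card : ZMod 2) *
          (b (Q.card : ZMod 4) + b (2 - (S.card : ZMod 4) - (Q.card : ZMod 4)))
        + ((Q ∩ S).card : ZMod 2) *
          (c ((Q.card : ZMod 4) + 1) + c (2 - (S.card : ZMod 4) - ((Q.card : ZMod 4) + 1))))
      + ((Q ∩ P).card : ZMod 2) * (((Q ∩ S).card : ZMod 2) *
          ((c ((Q.card : ZMod 4) + 3) + c (2 - (S.card : ZMod 4) - ((Q.card : ZMod 4) + 3)))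
          + (c ((Q.card : ZMod 4) + 1) + c (2 - (S.card : ZMod 4) - ((Q.card : ZMod 4) + 1)))))
      + ((P ∩ S).card : ZMod 2) * ((b 1 + b (2 - (S.card : ZMod 4) - 1))
          + (c ((Q.card : ZMod 4) + 1) + c (2 - (S.card : ZMod 4) - ((Q.card : ZMod 4) + 1))))
      + ((Q ∩ P ∩ S).card : ZMod 2) *
          ((c ((Q.card : ZMod 4) + 3) + c (2 - (S.card : ZMod 4) - ((Q.card : ZMod 4) + 3)))
          + (c ((Q.card : ZMod 4) + 1) + c (2 - (S.card : ZMod 4) - ((Q.card : ZMod 4) + 1)))) := by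
  have hPQ : P ∩ Q = Q ∩ P := Finset.inter_comm P Q
  have hPQS : P ∩ (Q ∩ S) = Q ∩ P ∩ S := by
    ext x
    simp only [Finset.mem_inter]
    tauto
  rw [← hPQS, ← hPQ]
  refine sum_split P Q S _ _ _ _ _ ?_
  intro z hz
  rw [cS_eq h4 b c S Q {z}, zmod2_singleton_inter z S, Finset.card_singleton, Nat.cast_one]
  by_cases hzQ : z ∈ Q <;> by_cases hzS : z ∈ S
  · rw [symmDiff_singleton_mem hzQ, zmod4_card_erase_mem hzQ]
    simp only [Finset.mem_inter, hzQ, hzS, and_self, and_true, true_and, and_false, false_and, ite_true, ite_false, if_true, if_false]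
    ring_nf
    try reduce_mod_char
  · rw [symmDiff_singleton_mem hzQ, zmod4_card_erase_mem hzQ]
    simp only [Finset.mem_inter, hzQ, hzS, and_self, and_true, true_and, and_false, false_and, ite_true, ite_false, if_true, if_false]
    ring_nf
    try reduce_mod_char
  · rw [symmDiff_singleton_not_mem hzQ, zmod4_card_insert_notMem hzQ]
    simp only [Finset.mem_inter, hzQ, hzS, and_self, and_true, true_and, and_false, false_and, ite_true, ite_false, if_true, if_false]
    ring_nf
    try reduce_mod_char
  · rw [symmDiff_singleton_not_mem hzQ, zmod4_card_insert_notMem hzQ]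
    simp only [Finset.mem_inter, hzQ, hzS, and_self, and_true, true_and, and_false, false_and, ite_true, ite_false, if_true, if_false]
    ring_nf
    try reduce_mod_char

set_option maxHeartbeats 1600000 in
lemma sumT3 (h4 : 4 ∣ Fintype.card V) (b c : ZMod 4 → ZMod 2) (S Q P : Finset V) :
    ∑ z ∈ Q, cS b c S {z} P =
      (Q.card : ZMod 2) * (((P ∩ S).card : ZMod 2) *
          (b (P.card : ZMod 4) + b (2 - (S.card : ZMod 4) - (P.card : ZMod 4)))
        + ((P ∩ S).card : ZMod 2) *
          (c ((P.card : ZMod 4) + 1) + c (2 - (S.card : ZMod 4) - ((P.card : ZMod 4) + 1))))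
      + ((Q ∩ P).card : ZMod 2) * (((P ∩ S).card : ZMod 2) *
          ((c ((P.card : ZMod 4) + 3) + c (2 - (S.card : ZMod 4) - ((P.card : ZMod 4) + 3)))
          + (c ((P.card : ZMod 4) + 1) + c (2 - (S.card : ZMod 4) - ((P.card : ZMod 4) + 1)))))
      + ((Q ∩ S).card : ZMod 2) * ((b 1 + b (2 - (S.card : ZMod 4) - 1))
          + (c ((P.card : ZMod 4) + 1) + c (2 - (S.card : ZMod 4) - ((P.card : ZMod 4) + 1))))
      + ((Q ∩ P ∩ S).card : ZMod 2) *
          ((c ((P.card : ZMod 4) + 3) + c (2 - (S.card : ZMod 4) - ((P.card : ZMod 4) + 3)))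
          + (c ((P.card : ZMod 4) + 1) + c (2 - (S.card : ZMod 4) - ((P.card : ZMod 4) + 1)))) := by
  have hQPS : Q ∩ (P ∩ S) = Q ∩ P ∩ S := by
    ext x
    simp only [Finset.mem_inter]
    tauto
  rw [← hQPS]
  refine sum_split Q P S _ _ _ _ _ ?_
  intro z hz
  rw [cS_eq h4 b c S {z} P, zmod2_singleton_inter z S, Finset.card_singleton, Nat.cast_one]
  have hcomm : ({z} : Finset V) ∆ P = P ∆ {z} := symmDiff_comm _ _
  rw [hcomm]
  by_cases hzP : z ∈ P <;> by_cases hzS : z ∈ S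
  · rw [symmDiff_singleton_mem hzP, zmod4_card_erase_mem hzP]
    simp only [Finset.mem_inter, hzP, hzS, and_self, and_true, true_and, and_false, false_and, ite_true, ite_false, if_true, if_false]
    ring_nf
    try reduce_mod_char
  · rw [symmDiff_singleton_mem hzP, zmod4_card_erase_mem hzP]
    simp only [Finset.mem_inter, hzP, hzS, and_self, and_true, true_and, and_false, false_and, ite_true, ite_false, if_true, if_false]
    ring_nf
    try reduce_mod_char
  · rw [symmDiff_singleton_not_mem hzP, zmod4_card_insert_notMem hzP]
    simp only [Finset.mem_inter, hzP, hzS, and_self, and_true, true_and, and_false, false_and, ite_true, ite_false, if_true, if_false]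
    ring_nf
    try reduce_mod_char
  · rw [symmDiff_singleton_not_mem hzP, zmod4_card_insert_notMem hzP]
    simp only [Finset.mem_inter, hzP, hzS, and_self, and_true, true_and, and_false, false_and, ite_true, ite_false, if_true, if_false]
    ring_nf
    try reduce_mod_char

set_option maxHeartbeats 1600000 in
lemma sumT4 (h4 : 4 ∣ Fintype.card V) (b c : ZMod 4 → ZMod 2) (S Q P : Finset V) :
    ∑ z ∈ Q, ∑ z₁ ∈ P.erase z, cS b c S {z} {z₁} =
      (Q.card : ZMod 2) * (((P ∩ S).card : ZMod 2) *
          ((b 1 + b (2 - (S.card : ZMod 4) - 1)) + (c 2 + c (2 - (S.card : ZMod 4) - 2))))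
      + ((Q ∩ S).card : ZMod 2) * ((P.card : ZMod 2) *
          ((b 1 + b (2 - (S.card : ZMod 4) - 1)) + (c 2 + c (2 - (S.card : ZMod 4) - 2)))) := by
  refine sum_split1 Q S _ _ _ ?_
  intro z hz
  have hinner : ∑ z₁ ∈ P.erase z, cS b c S {z} {z₁} =
      ((P.erase z).card : ZMod 2) * ((if z ∈ S then (1 : ZMod 2) else 0) *
          ((b 1 + b (2 - (S.card : ZMod 4) - 1)) + (c 2 + c (2 - (S.card : ZMod 4) - 2))))
      + (((P.erase z) ∩ S).card : ZMod 2) *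
          ((b 1 + b (2 - (S.card : ZMod 4) - 1)) + (c 2 + c (2 - (S.card : ZMod 4) - 2))) := by
    refine sum_split1 (P.erase z) S _ _ _ ?_
    intro z₁ hz₁
    have hne : z ≠ z₁ := fun he => (Finset.ne_of_mem_erase hz₁) he.symm
    rw [cS_eq h4 b c S {z} {z₁}, zmod2_singleton_inter z S, zmod2_singleton_inter z₁ S,
      Finset.card_singleton z, Finset.card_singleton z₁, Nat.cast_one,
      zmod4_card_singleton_symmDiff hne]
    by_cases hz₁S : z₁ ∈ S
    · simp only [hz₁S, ite_true, if_true]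
      ring
    · simp only [hz₁S, ite_false, if_false]
      ring
  rw [hinner, zmod2_card_erase z P, erase_inter' z P S, zmod2_card_erase z (P ∩ S)]
  have hii : (if z ∈ P ∩ S then (1 : ZMod 2) else 0) =
      (if z ∈ P then (1 : ZMod 2) else 0) * (if z ∈ S then (1 : ZMod 2) else 0) := by
    by_cases hzP : z ∈ P <;> by_cases hzS : z ∈ S <;>
      simp [Finset.mem_inter, hzP, hzS]
  rw [hii]
  by_cases hzS : z ∈ S <;>
    simp only [hzS, ite_true, if_true, ite_false, if_false] <;>
    ring_nf <;>
    try reduce_mod_char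

lemma sum_bS_single (h4 : 4 ∣ Fintype.card V) (b : ZMod 4 → ZMod 2) (S Q : Finset V) :
    ∑ z ∈ Q, bS b S {z} =
      (Q.card : ZMod 2) * 0 + ((Q ∩ S).card : ZMod 2) * (b 1 + b (2 - (S.card : ZMod 4) - 1)) := by
  refine sum_split1 Q S _ _ _ ?_
  intro z hz
  rw [bS_eq h4 b S {z}, zmod2_singleton_inter z S, Finset.card_singleton, Nat.cast_one]
  by_cases hzS : z ∈ S <;> simp [hzS]

end SumEval

section Pairs

variable {V : Type*} [Fintype V] [DecidableEq V]

lemma filter_lt_union_gt [LinearOrder V] (Q : Finset V) (z : V) :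
    (Q.filter (fun z' => z < z')) ∪ (Q.filter (fun z' => z' < z)) = Q.erase z := by
  ext x
  simp only [Finset.mem_union, Finset.mem_filter, Finset.mem_erase]
  constructor
  · rintro (⟨hx, hlt⟩ | ⟨hx, hlt⟩)
    · exact ⟨ne_of_gt hlt, hx⟩
    · exact ⟨ne_of_lt hlt, hx⟩
  · rintro ⟨hne, hx⟩
    rcases lt_or_gt_of_ne hne with h | h
    · exact Or.inr ⟨hx, h⟩
    · exact Or.inl ⟨hx, h⟩

lemma sum_pairs [LinearOrder V] (Q : Finset V) (f : V → ZMod 2) :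
    ∑ z ∈ Q, ∑ z' ∈ Q.filter (fun z' => z < z'), (f z + f z') =
    ∑ z ∈ Q, ((Q.erase z).card : ZMod 2) * f z := by
  have h1 : ∀ z ∈ Q, ∑ z' ∈ Q.filter (fun z' => z < z'), (f z + f z') =
      (Q.filter (fun z' => z < z')).card • f z +
        ∑ z' ∈ Q.filter (fun z' => z < z'), f z' := by
    intro z _
    rw [Finset.sum_add_distrib, Finset.sum_const]
  rw [Finset.sum_congr rfl h1, Finset.sum_add_distrib]
  have h2 : ∑ z ∈ Q, ∑ z' ∈ Q.filter (fun z' => z < z'), f z' =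
      ∑ z' ∈ Q, ∑ z ∈ Q.filter (fun x => x < z'), f z' := by
    refine Finset.sum_comm' ?_
    intro x y
    simp only [Finset.mem_filter]
    tauto
  rw [h2]
  have h3 : ∀ z' ∈ Q, ∑ z ∈ Q.filter (fun x => x < z'), f z' =
      (Q.filter (fun x => x < z')).card • f z' := by
    intro z' _
    rw [Finset.sum_const]
  rw [Finset.sum_congr rfl h3, ← Finset.sum_add_distrib]
  refine Finset.sum_congr rfl ?_
  intro z hz
  rw [← add_nsmul]
  have hcard : (Q.filter (fun z' => z < z')).card + (Q.filter (fun x => x < z)).card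
      = (Q.erase z).card := by
    rw [← filter_lt_union_gt Q z]
    rw [Finset.card_union_of_disjoint]
    rw [Finset.disjoint_left]
    intro a ha hb
    simp only [Finset.mem_filter] at ha hb
    exact absurd (ha.2.trans hb.2) (lt_irrefl z)
  rw [hcard, nsmul_eq_mul]

end Pairs

section Master

lemma cast_nat_zmod4 (n : ℕ) : (n : ZMod 4) = ((n % 4 : ℕ) : ZMod 4) := (ZMod.natCast_mod n 4).symm

lemma cast_nat_zmod2 (n : ℕ) : (n : ZMod 2) = ((n % 4 : ℕ) : ZMod 2) := by
  conv_lhs => rw [← ZMod.natCast_mod n 2]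
  rw [← Nat.mod_mod_of_dvd n (by norm_num : 2 ∣ 4), ZMod.natCast_mod]

set_option maxHeartbeats 4000000 in
lemma master2 (b c : ZMod 4 → ZMod 2) (hbc02 : c 0 + c 2 = b 0 + b 2)
    (hbc13 : c 1 + c 3 = b 1 + b 3) (sN nN : ℕ) (al : ZMod 2) :
    (nN : ZMod 2) * (al * (b (nN : ZMod 4) + b (2 - (sN : ZMod 4) - (nN : ZMod 4)))
        + al * (c ((nN : ZMod 4) + 1) + c (2 - (sN : ZMod 4) - ((nN : ZMod 4) + 1))))
      + (nN : ZMod 2) * (al * ((c ((nN : ZMod 4) + 3) + c (2 - (sN : ZMod 4) - ((nN : ZMod 4) + 3)))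
          + (c ((nN : ZMod 4) + 1) + c (2 - (sN : ZMod 4) - ((nN : ZMod 4) + 1)))))
      + al * ((b 1 + b (2 - (sN : ZMod 4) - 1))
          + (c ((nN : ZMod 4) + 1) + c (2 - (sN : ZMod 4) - ((nN : ZMod 4) + 1))))
      + al * ((c ((nN : ZMod 4) + 3) + c (2 - (sN : ZMod 4) - ((nN : ZMod 4) + 3)))
          + (c ((nN : ZMod 4) + 1) + c (2 - (sN : ZMod 4) - ((nN : ZMod 4) + 1))))
      + ((nN : ZMod 2) * 0 + al * (((nN : ZMod 2) + 1) *
          ((b 1 + b (2 - (sN : ZMod 4) - 1)) + (c 2 + c (2 - (sN : ZMod 4) - 2)))))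
    = al * (b (nN : ZMod 4) + b (2 - (sN : ZMod 4) - (nN : ZMod 4)))
      + ((nN : ZMod 2) * 0 + al * (b 1 + b (2 - (sN : ZMod 4) - 1))) := by
  have hc2 : c 2 = b 0 + b 2 - c 0 := by linear_combination hbc02
  have hc3 : c 3 = b 1 + b 3 - c 1 := by linear_combination hbc13
  rw [cast_nat_zmod4 sN, cast_nat_zmod4 nN, cast_nat_zmod2 nN]
  have hs : sN % 4 < 4 := Nat.mod_lt _ (by norm_num)
  have hn : nN % 4 < 4 := Nat.mod_lt _ (by norm_num)
  generalize hs' : sN % 4 = sr at hs ⊢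
  generalize hn' : nN % 4 = nr at hn ⊢
  interval_cases sr <;> interval_cases nr <;>
    · push_cast
      reduce_mod_char!
      simp only [hc2, hc3]
      ring_nf
      try reduce_mod_char

end Master

section PairsCS

variable {V : Type*} [Fintype V] [DecidableEq V]

set_option maxHeartbeats 1600000 in
lemma sum_pairs_cS [LinearOrder V] (h4 : 4 ∣ Fintype.card V) (b c : ZMod 4 → ZMod 2)
    (S Q : Finset V) :
    ∑ z ∈ Q, ∑ z' ∈ Q.filter (fun z' => z < z'), cS b c S {z} {z'} =
      (Q.card : ZMod 2) * 0 + ((Q ∩ S).card : ZMod 2) * (((Q.card : ZMod 2) + 1) *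
        ((b 1 + b (2 - (S.card : ZMod 4) - 1)) + (c 2 + c (2 - (S.card : ZMod 4) - 2)))) := by
  have hstep : ∑ z ∈ Q, ∑ z' ∈ Q.filter (fun z' => z < z'), cS b c S {z} {z'} =
      ∑ z ∈ Q, ∑ z' ∈ Q.filter (fun z' => z < z'),
        ((fun w => (if w ∈ S then (1 : ZMod 2) else 0) *
          ((b 1 + b (2 - (S.card : ZMod 4) - 1)) + (c 2 + c (2 - (S.card : ZMod 4) - 2)))) z +
         (fun w => (if w ∈ S then (1 : ZMod 2) else 0) *
          ((b 1 + b (2 - (S.card : ZMod 4) - 1)) + (c 2 + c (2 - (S.card : ZMod 4) - 2)))) z') := by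
    refine Finset.sum_congr rfl ?_
    intro z _
    refine Finset.sum_congr rfl ?_
    intro z' hz'
    have hne : z ≠ z' := ne_of_lt (Finset.mem_filter.mp hz').2
    rw [cS_eq h4 b c S {z} {z'}, zmod2_singleton_inter z S, zmod2_singleton_inter z' S,
      Finset.card_singleton z, Finset.card_singleton z', Nat.cast_one,
      zmod4_card_singleton_symmDiff hne]
    ring
  rw [hstep, sum_pairs]
  refine sum_split1 Q S _ 0 _ ?_
  intro z hz
  rw [zmod2_card_erase z Q]
  simp only [hz, ite_true, if_true]
  by_cases hzS : z ∈ S <;>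
    simp only [hzS, ite_true, if_true, ite_false, if_false] <;>
    ring

end PairsCS


set_option maxHeartbeats 40000000 in
lemma master1 (b c : ZMod 4 → ZMod 2) (hbc02 : c 0 + c 2 = b 0 + b 2)
    (hbc13 : c 1 + c 3 = b 1 + b 3) (sN nN n1N iN : ℕ) (al al1 tau : ZMod 2) :
    (al * (b (nN : ZMod 4) + b (2 - (sN : ZMod 4) - (nN : ZMod 4)))
      + al1 * (b (n1N : ZMod 4) + b (2 - (sN : ZMod 4) - (n1N : ZMod 4)))
      + (al + al1) * (c ((nN : ZMod 4) + (n1N : ZMod 4) + 2 * (iN : ZMod 4))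
          + c (2 - (sN : ZMod 4) - ((nN : ZMod 4) + (n1N : ZMod 4) + 2 * (iN : ZMod 4)))))
    + ((n1N : ZMod 2) * (al * (b (nN : ZMod 4) + b (2 - (sN : ZMod 4) - (nN : ZMod 4)))
        + al * (c ((nN : ZMod 4) + 1) + c (2 - (sN : ZMod 4) - ((nN : ZMod 4) + 1))))
      + (iN : ZMod 2) * (al * ((c ((nN : ZMod 4) + 3) + c (2 - (sN : ZMod 4) - ((nN : ZMod 4) + 3)))
          + (c ((nN : ZMod 4) + 1) + c (2 - (sN : ZMod 4) - ((nN : ZMod 4) + 1)))))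
      + al1 * ((b 1 + b (2 - (sN : ZMod 4) - 1))
          + (c ((nN : ZMod 4) + 1) + c (2 - (sN : ZMod 4) - ((nN : ZMod 4) + 1))))
      + tau * ((c ((nN : ZMod 4) + 3) + c (2 - (sN : ZMod 4) - ((nN : ZMod 4) + 3)))
          + (c ((nN : ZMod 4) + 1) + c (2 - (sN : ZMod 4) - ((nN : ZMod 4) + 1)))))
    + ((nN : ZMod 2) * (al1 * (b (n1N : ZMod 4) + b (2 - (sN : ZMod 4) - (n1N : ZMod 4)))
        + al1 * (c ((n1N : ZMod 4) + 1) + c (2 - (sN : ZMod 4) - ((n1N : ZMod 4) + 1))))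
      + (iN : ZMod 2) * (al1 * ((c ((n1N : ZMod 4) + 3) + c (2 - (sN : ZMod 4) - ((n1N : ZMod 4) + 3)))
          + (c ((n1N : ZMod 4) + 1) + c (2 - (sN : ZMod 4) - ((n1N : ZMod 4) + 1)))))
      + al * ((b 1 + b (2 - (sN : ZMod 4) - 1))
          + (c ((n1N : ZMod 4) + 1) + c (2 - (sN : ZMod 4) - ((n1N : ZMod 4) + 1))))
      + tau * ((c ((n1N : ZMod 4) + 3) + c (2 - (sN : ZMod 4) - ((n1N : ZMod 4) + 3)))
          + (c ((n1N : ZMod 4) + 1) + c (2 - (sN : ZMod 4) - ((n1N : ZMod 4) + 1)))))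
    + ((nN : ZMod 2) * (al1 *
          ((b 1 + b (2 - (sN : ZMod 4) - 1)) + (c 2 + c (2 - (sN : ZMod 4) - 2))))
      + al * ((n1N : ZMod 2) *
          ((b 1 + b (2 - (sN : ZMod 4) - 1)) + (c 2 + c (2 - (sN : ZMod 4) - 2)))))
    = 0 := by
  have hc2 : c 2 = b 0 + b 2 - c 0 := by linear_combination hbc02
  have hc3 : c 3 = b 1 + b 3 - c 1 := by linear_combination hbc13
  rw [cast_nat_zmod4 sN, cast_nat_zmod4 nN, cast_nat_zmod2 nN, cast_nat_zmod4 n1N,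
    cast_nat_zmod2 n1N, cast_nat_zmod4 iN, cast_nat_zmod2 iN]
  have hs : sN % 4 < 4 := Nat.mod_lt _ (by norm_num)
  have hn : nN % 4 < 4 := Nat.mod_lt _ (by norm_num)
  have hn1 : n1N % 4 < 4 := Nat.mod_lt _ (by norm_num)
  have hi : iN % 4 < 4 := Nat.mod_lt _ (by norm_num)
  generalize hs' : sN % 4 = sr at hs ⊢
  generalize hn' : nN % 4 = nr at hn ⊢
  generalize hn1' : n1N % 4 = n1r at hn1 ⊢
  generalize hi' : iN % 4 = ir at hi ⊢
  interval_cases sr <;> interval_cases nr <;> interval_cases n1r <;> interval_cases ir <;>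
    · push_cast
      reduce_mod_char!
      simp only [hc2, hc3]
      ring_nf
      try reduce_mod_char

theorem stmt12 {V : Type*} [Fintype V] [LinearOrder V]
    (h4 : 4 ∣ Fintype.card V) (b c : ZMod 4 → ZMod 2)
    (hbc02 : c 0 + c 2 = b 0 + b 2) (hbc13 : c 1 + c 3 = b 1 + b 3) :
    (∀ S Q Q₁ : Finset V, Q ≠ Q₁ →
      cS b c S Q Q₁ + (∑ z₁ ∈ Q₁, cS b c S Q {z₁}) + (∑ z ∈ Q, cS b c S {z} Q₁) +
        (∑ z ∈ Q, ∑ z₁ ∈ Q₁.erase z, cS b c S {z} {z₁}) = 0) ∧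
    (∀ S Q : Finset V,
      (∑ z ∈ Q, cS b c S Q {z}) +
        (∑ z ∈ Q, ∑ z' ∈ Q.filter (fun z' => z < z'), cS b c S {z} {z'}) =
      bS b S Q + ∑ z ∈ Q, bS b S {z}) := by
  constructor
  · intro S Q Q₁ _
    rw [cS_eq h4 b c S Q Q₁, sumT2 h4 b c S Q Q₁, sumT3 h4 b c S Q Q₁,
      sumT4 h4 b c S Q Q₁, zmod4_card_symmDiff Q Q₁]
    exact master1 b c hbc02 hbc13 S.card Q.card Q₁.card ((Q ∩ Q₁).card)
      ((Q ∩ S).card : ZMod 2) ((Q₁ ∩ S).card : ZMod 2) ((Q ∩ Q₁ ∩ S).card : ZMod 2)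
  · intro S Q
    rw [sumT2 h4 b c S Q Q, Finset.inter_self Q, sum_pairs_cS h4 b c S Q,
      bS_eq h4 b S Q, sum_bS_single h4 b S Q]
    exact master2 b c hbc02 hbc13 S.card Q.card ((Q ∩ S).card : ZMod 2)
end

section
/- Let V be a finite set with N := |V| divisible by 4, and let b, c : ZMod 4 → ZMod 2 satisfy b(0) = 1, c(0) = 1, b(2) + c(2) = 0, and b(1) + c(1) + b(3) + c(3) = 0. Then there is no bivaluation on the resulting finite coherent orthoalgebra; precisely, there exists no function f : 𝒫^{T_c}(A_b) → ZMod 2 such that f(∅) = 0, f(A_b) = 1, and for all Q, Q₁ ∈ 𝒫^{T_c}(A_b) with Q₁ ⊆ Q^{T_c}: not both f(Q) = 1 and f(Q₁) = 1, and f(((Q ∪ Q₁)^{T_c})^{T_c}) = f(Q) + f(Q₁). -/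
open scoped symmDiff

/-- `L_b(U) := {φ : V → ZMod 2 | ∑_{z ∈ U} φ z = b(|U| mod 4)}`. -/
def Lb {V : Type*} [DecidableEq V] (b : ZMod 4 → ZMod 2) (U : Finset V) :
    Set (V → ZMod 2) :=
  {φ | ∑ z ∈ U, φ z = b (U.card : ZMod 4)}

/-- `A_b`: the disjoint union over `U ⊆ V` of the sets `L_b(U)`,
realized as the set of pairs `(U, φ)` with `φ ∈ L_b(U)`. -/
def AbGround (V : Type*) [DecidableEq V] (b : ZMod 4 → ZMod 2) : Type _ :=
  {p : Finset V × (V → ZMod 2) // p.2 ∈ Lb b p.1}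

/-- The relation `T_c` on pairs `(U, φ)`: for equal first components it is `φ ≠ φ'`,
and for `U ≠ U₁` it is `∑_{z ∈ U Δ U₁} (φ z + φ₁ z) ≠ c(|U Δ U₁| mod 4)`. -/
def TcP {V : Type*} [DecidableEq V] (c : ZMod 4 → ZMod 2)
    (p q : Finset V × (V → ZMod 2)) : Prop :=
  if p.1 = q.1 then p.2 ≠ q.2
  else ∑ z ∈ p.1 ∆ q.1, (p.2 z + q.2 z) ≠ c (((p.1 ∆ q.1).card : ZMod 4))

/-- The relation `T_c` on `A_b`. -/
def Tc {V : Type*} [DecidableEq V] (b : ZMod 4 → ZMod 2) (c : ZMod 4 → ZMod 2)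
    (l l₁ : AbGround V b) : Prop :=
  TcP c l.1 l₁.1


open scoped symmDiff

namespace KS15

variable {V : Type*} [Fintype V] [DecidableEq V]

lemma z2cases (x : ZMod 2) : x = 0 ∨ x = 1 := by revert x; decide

lemma z2_add_self (x : ZMod 2) : x + x = 0 := by revert x; decide

lemma z2_ne_iff {x y : ZMod 2} : x ≠ y ↔ x = y + 1 := by revert x y; decide

lemma z2_two (t : ZMod 2) : t + 1 + 1 = t := by revert t; decide

def indi (X : Finset V) (z : V) : ZMod 2 := if z ∈ X then 1 else 0

lemma indi_symmDiff (X Y : Finset V) (z : V) :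
    indi (X ∆ Y) z = indi X z + indi Y z := by
  by_cases hx : z ∈ X <;> by_cases hy : z ∈ Y <;>
    simp [indi, Finset.mem_symmDiff, hx, hy] <;> decide

lemma indi_mem {X : Finset V} {z : V} (h : z ∈ X) : indi X z = 1 := if_pos h

lemma sum_symmDiff_two (φ : V → ZMod 2) (X Y : Finset V) :
    ∑ z ∈ X ∆ Y, φ z = ∑ z ∈ X, φ z + ∑ z ∈ Y, φ z := by
  have hd : Disjoint (X ∆ Y) (X ∩ Y) := by
    have := disjoint_symmDiff_inf X Y
    simpa [Finset.inf_eq_inter] using this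
  have hu : (X ∆ Y) ∪ (X ∩ Y) = X ∪ Y := by
    have := symmDiff_sup_inf X Y
    simpa [Finset.sup_eq_union, Finset.inf_eq_inter] using this
  have h1 : ∑ z ∈ X ∆ Y, φ z + ∑ z ∈ X ∩ Y, φ z = ∑ z ∈ X ∪ Y, φ z := by
    rw [← Finset.sum_union hd, hu]
  have h2 := Finset.sum_union_inter (s₁ := X) (s₂ := Y) (f := φ)
  linear_combination h1 + h2 - z2_add_self (∑ z ∈ X ∩ Y, φ z)

lemma card_symmDiff_nat (X Y : Finset V) :
    (X ∆ Y).card + 2 * (X ∩ Y).card = X.card + Y.card := by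
  have hd : Disjoint (X ∆ Y) (X ∩ Y) := by
    have := disjoint_symmDiff_inf X Y
    simpa [Finset.inf_eq_inter] using this
  have hu : (X ∆ Y) ∪ (X ∩ Y) = X ∪ Y := by
    have := symmDiff_sup_inf X Y
    simpa [Finset.sup_eq_union, Finset.inf_eq_inter] using this
  have h1 : (X ∆ Y).card + (X ∩ Y).card = (X ∪ Y).card := by
    rw [← Finset.card_union_of_disjoint hd, hu]
  have h2 := Finset.card_union_add_card_inter X Y
  omega

section star
variable (b c : ZMod 4 → ZMod 2)

lemma z4cases (x : ZMod 4) : x = 0 ∨ x = 1 ∨ x = 2 ∨ x = 3 := by revert x; decide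

lemma geven (hb0 : b 0 = 1) (hc0 : c 0 = 1) (hbc2 : b 2 + c 2 = 0)
    (x : ZMod 4) (hx : x.val % 2 = 0) : b x + c x = 0 := by
  rcases z4cases x with rfl | rfl | rfl | rfl
  · rw [hb0, hc0]; decide
  · exact absurd hx (by decide)
  · exact hbc2
  · exact absurd hx (by decide)

lemma godd (hbc13 : b 1 + c 1 + b 3 + c 3 = 0)
    (x y : ZMod 4) (hx : x.val % 2 = 1) (hy : y.val % 2 = 1) :
    (b x + c x) + (b y + c y) = 0 := by
  rcases z4cases x with rfl | rfl | rfl | rfl <;>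
    rcases z4cases y with rfl | rfl | rfl | rfl <;>
    first
      | exact absurd hx (by decide)
      | exact absurd hy (by decide)
      | exact z2_add_self _
      | linear_combination hbc13

lemma val_natCast_mod2 (k : ℕ) : ((k : ZMod 4)).val % 2 = k % 2 := by
  rw [ZMod.val_natCast]
  omega

lemma star (hb0 : b 0 = 1) (hc0 : c 0 = 1) (hbc2 : b 2 + c 2 = 0)
    (hbc13 : b 1 + c 1 + b 3 + c 3 = 0) (X Y : Finset V) :
    b (X.card : ZMod 4) + b (Y.card : ZMod 4) + b ((X ∆ Y).card : ZMod 4)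
      + c (X.card : ZMod 4) + c (Y.card : ZMod 4) + c ((X ∆ Y).card : ZMod 4) = 0 := by
  have hcard := card_symmDiff_nat X Y
  have hpar : (X ∆ Y).card % 2 = (X.card + Y.card) % 2 := by omega
  rcases Nat.mod_two_eq_zero_or_one X.card with hX | hX <;> rcases Nat.mod_two_eq_zero_or_one Y.card with hY | hY
  · have h1 := geven b c hb0 hc0 hbc2 (X.card : ZMod 4) (by rw [val_natCast_mod2]; omega)
    have h2 := geven b c hb0 hc0 hbc2 (Y.card : ZMod 4) (by rw [val_natCast_mod2]; omega)
    have h3 := geven b c hb0 hc0 hbc2 ((X ∆ Y).card : ZMod 4) (by rw [val_natCast_mod2]; omega)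
    linear_combination h1 + h2 + h3
  · have h1 := geven b c hb0 hc0 hbc2 (X.card : ZMod 4) (by rw [val_natCast_mod2]; omega)
    have h2 := godd b c hbc13 (Y.card : ZMod 4) ((X ∆ Y).card : ZMod 4)
      (by rw [val_natCast_mod2]; omega) (by rw [val_natCast_mod2]; omega)
    linear_combination h1 + h2
  · have h1 := geven b c hb0 hc0 hbc2 (Y.card : ZMod 4) (by rw [val_natCast_mod2]; omega)
    have h2 := godd b c hbc13 (X.card : ZMod 4) ((X ∆ Y).card : ZMod 4)
      (by rw [val_natCast_mod2]; omega) (by rw [val_natCast_mod2]; omega)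
    linear_combination h1 + h2
  · have h1 := godd b c hbc13 (X.card : ZMod 4) (Y.card : ZMod 4)
      (by rw [val_natCast_mod2]; omega) (by rw [val_natCast_mod2]; omega)
    have h2 := geven b c hb0 hc0 hbc2 ((X ∆ Y).card : ZMod 4) (by rw [val_natCast_mod2]; omega)
    linear_combination h1 + h2
end star

end KS15
open scoped symmDiff
namespace KS15
variable {V : Type*} [Fintype V] [DecidableEq V]

set_option linter.unusedSectionVars false

lemma exists_phi : ∀ (k : ℕ) (S : Fin k → Finset V)
    (_ : ∀ a : Fin k → ZMod 2, a ≠ 0 → ∃ z : V, ∑ i, a i * indi (S i) z = 1)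
    (t : Fin k → ZMod 2), ∃ φ : V → ZMod 2, ∀ i, ∑ z ∈ S i, φ z = t i := by
  intro k
  induction k with
  | zero => exact fun S hind t => ⟨fun _ => 0, fun i => i.elim0⟩
  | succ k IH =>
    intro S hind t
    set S' : Fin k → Finset V := fun i => S i.castSucc with hS'
    have hind' : ∀ a : Fin k → ZMod 2, a ≠ 0 → ∃ z, ∑ i, a i * indi (S' i) z = 1 := by
      intro a ha
      obtain ⟨z, hz⟩ := hind (Fin.snoc a 0) (by
        intro h0
        exact ha (funext fun i => by
          simpa [Fin.snoc_castSucc] using congrFun h0 i.castSucc))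
      refine ⟨z, ?_⟩
      rw [Fin.sum_univ_castSucc] at hz
      simpa [Fin.snoc_castSucc, Fin.snoc_last] using hz
    have dual : ∀ j : Fin k, ∃ ψ : V → ZMod 2,
        ∀ i, ∑ z ∈ S' i, ψ z = if i = j then 1 else 0 :=
      fun j => IH S' hind' (fun i => if i = j then 1 else 0)
    choose ψd hψd using dual
    obtain ⟨φ₀, hφ₀⟩ := IH S' hind' (fun i => t i.castSucc)
    have hψ : ∃ ψ : V → ZMod 2, (∀ i : Fin k, ∑ z ∈ S' i, ψ z = 0)
        ∧ ∑ z ∈ S (Fin.last k), ψ z = 1 := by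
      by_contra hcon
      push_neg at hcon
      set lam : Fin k → ZMod 2 := fun i => ∑ z ∈ S (Fin.last k), ψd i z with hlam
      obtain ⟨z, hz⟩ := hind (Fin.snoc lam 1) (by
        intro h0
        exact absurd (by simpa [Fin.snoc_last] using congrFun h0 (Fin.last k))
          (by decide : (1 : ZMod 2) ≠ 0))
      set ψ : V → ZMod 2 := fun w => (if w = z then 1 else 0)
        + ∑ i, indi (S' i) z * ψd i w with hψdef
      have key : ∀ X : Finset V,
          ∑ w ∈ X, ψ w = indi X z + ∑ i, indi (S' i) z * ∑ w ∈ X, ψd i w := by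
        intro X
        rw [hψdef]
        rw [Finset.sum_add_distrib]
        congr 1
        · rw [Finset.sum_ite_eq' X z (fun _ => (1 : ZMod 2))]
          rfl
        · rw [Finset.sum_comm]
          exact Finset.sum_congr rfl fun i _ => (Finset.mul_sum _ _ _).symm
      have hsum0 : ∀ j : Fin k, ∑ w ∈ S' j, ψ w = 0 := by
        intro j
        rw [key (S' j)]
        have : ∀ i : Fin k, indi (S' i) z * ∑ w ∈ S' j, ψd i w
            = if j = i then indi (S' i) z else 0 := by
          intro i
          rw [hψd i j]
          by_cases h : j = i <;> simp [h, eq_comm]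
        rw [Finset.sum_congr rfl fun i _ => this i, Finset.sum_ite_eq]
        simp [z2_add_self]
      have hlast : ∑ w ∈ S (Fin.last k), ψ w = 1 := by
        rw [key (S (Fin.last k))]
        rw [Fin.sum_univ_castSucc] at hz
        simp only [Fin.snoc_castSucc, Fin.snoc_last, one_mul] at hz
        calc indi (S (Fin.last k)) z + ∑ i, indi (S' i) z * lam i
            = ∑ i, lam i * indi (S (Fin.castSucc i)) z + indi (S (Fin.last k)) z := by
              rw [add_comm]; congr 1; exact Finset.sum_congr rfl fun i _ => mul_comm _ _
          _ = 1 := hz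
      exact (hcon ψ hsum0) hlast
    obtain ⟨ψc, hc0, hc1⟩ := hψ
    set τ : ZMod 2 := t (Fin.last k) + ∑ z ∈ S (Fin.last k), φ₀ z with hτ
    refine ⟨fun w => φ₀ w + τ * ψc w, ?_⟩
    intro i
    have expand : ∀ X : Finset V, ∑ w ∈ X, (φ₀ w + τ * ψc w)
        = ∑ w ∈ X, φ₀ w + τ * ∑ w ∈ X, ψc w := by
      intro X
      rw [Finset.sum_add_distrib, Finset.mul_sum]
    refine Fin.lastCases ?_ ?_ i
    · rw [expand, hc1, hτ, mul_one]
      linear_combination z2_add_self (∑ z ∈ S (Fin.last k), φ₀ z)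
    · intro j
      rw [expand, hc0 j, mul_zero, add_zero]
      exact hφ₀ j

lemma ex2 (X Y : Finset V) (h1 : X ≠ ∅) (h2 : Y ≠ ∅) (h3 : X ∆ Y ≠ ∅)
    (tX tY : ZMod 2) :
    ∃ φ : V → ZMod 2, ∑ z ∈ X, φ z = tX ∧ ∑ z ∈ Y, φ z = tY := by
  have hz2 : ∀ x : ZMod 2, x = 0 ∨ x = 1 := by decide
  obtain ⟨φ, hφ⟩ := exists_phi 2 ![X, Y] (by
    intro a ha
    rcases hz2 (a 0) with h0 | h0 <;> rcases hz2 (a 1) with h1' | h1'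
    · exact absurd (funext fun i => by fin_cases i <;> assumption) ha
    · obtain ⟨z, hz⟩ := Finset.nonempty_iff_ne_empty.mpr h2
      exact ⟨z, by simp [Fin.sum_univ_two, h0, h1', indi_mem hz]⟩
    · obtain ⟨z, hz⟩ := Finset.nonempty_iff_ne_empty.mpr h1
      exact ⟨z, by simp [Fin.sum_univ_two, h0, h1', indi_mem hz]⟩
    · obtain ⟨z, hz⟩ := Finset.nonempty_iff_ne_empty.mpr h3
      refine ⟨z, ?_⟩
      have := indi_mem hz
      rw [indi_symmDiff] at this
      simp [Fin.sum_univ_two, h0, h1']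
      linear_combination this) ![tX, tY]
  exact ⟨φ, by simpa using hφ 0, by simpa using hφ 1⟩

lemma ex3 (X Y Z : Finset V) (h1 : X ≠ ∅) (h2 : Y ≠ ∅) (h3 : Z ≠ ∅)
    (h12 : X ∆ Y ≠ ∅) (h13 : X ∆ Z ≠ ∅) (h23 : Y ∆ Z ≠ ∅)
    (h123 : X ∆ Y ∆ Z ≠ ∅) (tX tY tZ : ZMod 2) :
    ∃ φ : V → ZMod 2, ∑ z ∈ X, φ z = tX ∧ ∑ z ∈ Y, φ z = tY ∧ ∑ z ∈ Z, φ z = tZ := by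
  have hz2 : ∀ x : ZMod 2, x = 0 ∨ x = 1 := by decide
  obtain ⟨φ, hφ⟩ := exists_phi 3 ![X, Y, Z] (by
    intro a ha
    rcases hz2 (a 0) with h0 | h0 <;> rcases hz2 (a 1) with h1' | h1' <;>
      rcases hz2 (a 2) with h2' | h2'
    · exact absurd (funext fun i => by fin_cases i <;> assumption) ha
    · obtain ⟨z, hz⟩ := Finset.nonempty_iff_ne_empty.mpr h3
      exact ⟨z, by simp [Fin.sum_univ_three, h0, h1', h2', indi_mem hz]⟩
    · obtain ⟨z, hz⟩ := Finset.nonempty_iff_ne_empty.mpr h2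
      exact ⟨z, by simp [Fin.sum_univ_three, h0, h1', h2', indi_mem hz]⟩
    · obtain ⟨z, hz⟩ := Finset.nonempty_iff_ne_empty.mpr h23
      refine ⟨z, ?_⟩
      have := indi_mem hz; rw [indi_symmDiff] at this
      simp [Fin.sum_univ_three, h0, h1', h2']
      linear_combination this
    · obtain ⟨z, hz⟩ := Finset.nonempty_iff_ne_empty.mpr h1
      exact ⟨z, by simp [Fin.sum_univ_three, h0, h1', h2', indi_mem hz]⟩
    · obtain ⟨z, hz⟩ := Finset.nonempty_iff_ne_empty.mpr h13
      refine ⟨z, ?_⟩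
      have := indi_mem hz; rw [indi_symmDiff] at this
      simp [Fin.sum_univ_three, h0, h1', h2']
      linear_combination this
    · obtain ⟨z, hz⟩ := Finset.nonempty_iff_ne_empty.mpr h12
      refine ⟨z, ?_⟩
      have := indi_mem hz; rw [indi_symmDiff] at this
      simp [Fin.sum_univ_three, h0, h1', h2']
      linear_combination this
    · obtain ⟨z, hz⟩ := Finset.nonempty_iff_ne_empty.mpr h123
      refine ⟨z, ?_⟩
      have := indi_mem hz; rw [indi_symmDiff, indi_symmDiff] at this
      simp [Fin.sum_univ_three, h0, h1', h2']
      linear_combination this) ![tX, tY, tZ]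
  exact ⟨φ, by simpa using hφ 0, by simpa using hφ 1, by simpa using hφ 2⟩

lemma ex4 (X Y Z W : Finset V) (h1 : X ≠ ∅) (h2 : Y ≠ ∅) (h3 : Z ≠ ∅) (h4 : W ≠ ∅)
    (h12 : X ∆ Y ≠ ∅) (h13 : X ∆ Z ≠ ∅) (h14 : X ∆ W ≠ ∅)
    (h23 : Y ∆ Z ≠ ∅) (h24 : Y ∆ W ≠ ∅) (h34 : Z ∆ W ≠ ∅)
    (h123 : X ∆ Y ∆ Z ≠ ∅) (h124 : X ∆ Y ∆ W ≠ ∅) (h134 : X ∆ Z ∆ W ≠ ∅)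
    (h234 : Y ∆ Z ∆ W ≠ ∅) (h1234 : X ∆ Y ∆ Z ∆ W ≠ ∅)
    (tX tY tZ tW : ZMod 2) :
    ∃ φ : V → ZMod 2, ∑ z ∈ X, φ z = tX ∧ ∑ z ∈ Y, φ z = tY
      ∧ ∑ z ∈ Z, φ z = tZ ∧ ∑ z ∈ W, φ z = tW := by
  have hz2 : ∀ x : ZMod 2, x = 0 ∨ x = 1 := by decide
  have key : ∀ (A : Finset V), A ≠ ∅ → ∀ a : Fin 4 → ZMod 2,
      (∀ z : V, indi A z = a 0 * indi X z + a 1 * indi Y z + a 2 * indi Z z + a 3 * indi W z) →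
      ∃ z, ∑ i, a i * indi (![X, Y, Z, W] i) z = 1 := by
    intro A hA a hrep
    obtain ⟨z, hz⟩ := Finset.nonempty_iff_ne_empty.mpr hA
    refine ⟨z, ?_⟩
    have := indi_mem hz
    rw [hrep z] at this
    simp only [Fin.sum_univ_four]
    simpa using this
  obtain ⟨φ, hφ⟩ := exists_phi 4 ![X, Y, Z, W] (by
    intro a ha
    rcases hz2 (a 0) with h0 | h0 <;> rcases hz2 (a 1) with h1' | h1' <;>
      rcases hz2 (a 2) with h2' | h2' <;> rcases hz2 (a 3) with h3' | h3'
    · exact absurd (funext fun i => by fin_cases i <;> assumption) ha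
    · exact key W h4 a (fun z => by simp [h0, h1', h2', h3'])
    · exact key Z h3 a (fun z => by simp [h0, h1', h2', h3'])
    · exact key (Z ∆ W) h34 a (fun z => by
        rw [indi_symmDiff]; simp [h0, h1', h2', h3'])
    · exact key Y h2 a (fun z => by simp [h0, h1', h2', h3'])
    · exact key (Y ∆ W) h24 a (fun z => by
        rw [indi_symmDiff]; simp [h0, h1', h2', h3']; try ring)
    · exact key (Y ∆ Z) h23 a (fun z => by
        rw [indi_symmDiff]; simp [h0, h1', h2', h3']; try ring)
    · exact key (Y ∆ Z ∆ W) h234 a (fun z => by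
        rw [indi_symmDiff, indi_symmDiff]; simp [h0, h1', h2', h3']; try ring)
    · exact key X h1 a (fun z => by simp [h0, h1', h2', h3'])
    · exact key (X ∆ W) h14 a (fun z => by
        rw [indi_symmDiff]; simp [h0, h1', h2', h3']; try ring)
    · exact key (X ∆ Z) h13 a (fun z => by
        rw [indi_symmDiff]; simp [h0, h1', h2', h3']; try ring)
    · exact key (X ∆ Z ∆ W) h134 a (fun z => by
        rw [indi_symmDiff, indi_symmDiff]; simp [h0, h1', h2', h3']; try ring)
    · exact key (X ∆ Y) h12 a (fun z => by
        rw [indi_symmDiff]; simp [h0, h1', h2', h3']; try ring)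
    · exact key (X ∆ Y ∆ W) h124 a (fun z => by
        rw [indi_symmDiff, indi_symmDiff]; simp [h0, h1', h2', h3']; try ring)
    · exact key (X ∆ Y ∆ Z) h123 a (fun z => by
        rw [indi_symmDiff, indi_symmDiff]; simp [h0, h1', h2', h3']; try ring)
    · exact key (X ∆ Y ∆ Z ∆ W) h1234 a (fun z => by
        rw [indi_symmDiff, indi_symmDiff, indi_symmDiff]
        simp [h0, h1', h2', h3']; try ring) ) ![tX, tY, tZ, tW]
  exact ⟨φ, by simpa using hφ 0, by simpa using hφ 1, by simpa using hφ 2, by simpa using hφ 3⟩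

end KS15
open scoped symmDiff
namespace KS15
set_option linter.unusedSectionVars false
variable {V : Type*} [Fintype V] [DecidableEq V] (b c : ZMod 4 → ZMod 2)

lemma z2_succ_ne (x : ZMod 2) : x + 1 ≠ x := by revert x; decide

-- basic symmDiff facts
lemma sd_ne_empty {U W : Finset V} (h : U ≠ W) : U ∆ W ≠ ∅ := fun he =>
  h (symmDiff_eq_bot.mp (by simpa using he))

lemma sd_left_ne {U W : Finset V} (hW : W ≠ ∅) : U ≠ U ∆ W := by
  intro h
  have h2 := symmDiff_symmDiff_cancel_left U W
  rw [← h, symmDiff_self] at h2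
  exact hW (by simpa using h2.symm)

lemma sd_right_ne {U W : Finset V} (hU : U ≠ ∅) : W ≠ U ∆ W := by
  intro h
  have h2 := symmDiff_symmDiff_cancel_right W U
  rw [← h, symmDiff_self] at h2
  exact hU (by simpa using h2.symm)

lemma z2_of_ne_succ {x t : ZMod 2} (h : x ≠ t + 1) : x = t := by revert x t; decide

lemma z2_resolve {s x v : ZMod 2} (h : s + x ≠ v) : x = v + (s + 1) := by
  revert s x v; decide

lemma z2_absurd {x v : ZMod 2} (h0 : 0 + x ≠ v) (h1 : 1 + x ≠ v) : False := by
  revert x v; decide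

lemma z2_ne_succ' (t : ZMod 2) : t ≠ t + 1 := by revert t; decide

lemma z2_comp2 (t cw : ZMod 2) : t + (cw + (t + 1)) ≠ cw := by revert t cw; decide

lemma z2_comp3 (bu t cd : ZMod 2) : bu + t + (cd + bu + (t + 1)) ≠ cd := by
  revert bu t cd; decide

lemma sd_cross (U W X : Finset V) : (U ∆ W) ∆ (U ∆ X) = W ∆ X := by
  rw [symmDiff_comm U W, symmDiff_assoc, symmDiff_symmDiff_cancel_left]

-- ground facts
lemma ground_ne (hb0 : b 0 = 1) (l : AbGround V b) : l.1.1 ≠ ∅ := by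
  intro h
  have h2 : ∑ z ∈ l.1.1, l.1.2 z = b (l.1.1.card : ZMod 4) := l.2
  rw [h] at h2
  simp only [Finset.sum_empty, Finset.card_empty, Nat.cast_zero, hb0] at h2
  exact absurd h2 (by decide)

lemma sum_block {U : Finset V} {l : AbGround V b} (h : l.1.1 = U) :
    ∑ z ∈ U, l.1.2 z = b (U.card : ZMod 4) := by
  have h2 : ∑ z ∈ l.1.1, l.1.2 z = b (l.1.1.card : ZMod 4) := l.2
  rw [h] at h2
  exact h2

-- Tc lemmas
lemma tc_same {l m : AbGround V b} (h : l.1.1 = m.1.1) :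
    Tc b c l m ↔ l.1.2 ≠ m.1.2 := by
  unfold Tc TcP
  rw [if_pos h]

lemma tc_diff {l m : AbGround V b} (h : l.1.1 ≠ m.1.1) :
    Tc b c l m ↔
      ∑ z ∈ l.1.1 ∆ m.1.1, (l.1.2 z + m.1.2 z)
        ≠ c (((l.1.1 ∆ m.1.1).card : ZMod 4)) := by
  unfold Tc TcP
  rw [if_neg h]

lemma tc_irrefl (l : AbGround V b) : ¬ Tc b c l l := by
  rw [tc_same b c rfl]
  simp

lemma tc_symm {l m : AbGround V b} (h : Tc b c l m) : Tc b c m l := by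
  by_cases hb : l.1.1 = m.1.1
  · rw [tc_same b c hb] at h
    rw [tc_same b c hb.symm]
    exact h.symm
  · rw [tc_diff b c hb] at h
    rw [tc_diff b c (Ne.symm hb)]
    intro hEq
    apply h
    rw [symmDiff_comm m.1.1 l.1.1] at hEq
    rw [← hEq]
    exact Finset.sum_congr rfl fun z _ => add_comm _ _

-- polar basics (for Tc)
lemma mem_polar_iff {B : Set (AbGround V b)} {m : AbGround V b} :
    m ∈ polar (Tc b c) B ↔ ∀ l ∈ B, Tc b c l m := Iff.rfl

lemma polar_anti {B B' : Set (AbGround V b)} (h : B ⊆ B') :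
    polar (Tc b c) B' ⊆ polar (Tc b c) B :=
  fun _ hm l hl => hm l (h hl)

lemma subset_polar_polar (S : Set (AbGround V b)) :
    S ⊆ polar (Tc b c) (polar (Tc b c) S) :=
  fun l hl m hm => tc_symm b c (hm l hl)

lemma polar_union (A B : Set (AbGround V b)) :
    polar (Tc b c) (A ∪ B) = polar (Tc b c) A ∩ polar (Tc b c) B := by
  ext m
  simp only [polar, Set.mem_setOf_eq, Set.mem_union, Set.mem_inter_iff, or_imp, forall_and]

lemma polar_empty : polar (Tc b c) (∅ : Set (AbGround V b)) = Set.univ := by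
  ext m
  simp [polar]

-- half-blocks
def Hs (U W : Finset V) (t : ZMod 2) : Set (AbGround V b) :=
  {l | l.1.1 = U ∧ ∑ z ∈ W, l.1.2 z = t}

lemma mem_Hs {U W : Finset V} {t : ZMod 2} {l : AbGround V b} :
    l ∈ Hs b U W t ↔ l.1.1 = U ∧ ∑ z ∈ W, l.1.2 z = t := Iff.rfl

/-- the triple union `Q(U,W,t)` -/
def QQ (U W : Finset V) (t : ZMod 2) : Set (AbGround V b) :=
  Hs b U W t ∪ Hs b (U ∆ W) W (c ((W.card : ZMod 4)) + t)
    ∪ Hs b W (U ∆ W) (c (((U ∆ W).card : ZMod 4)) + b ((U.card : ZMod 4)) + t)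

lemma sum_sd_block {U W : Finset V} {l : AbGround V b} {s : ZMod 2}
    (h : l.1.1 = U) (hs : ∑ z ∈ W, l.1.2 z = s) :
    ∑ z ∈ U ∆ W, l.1.2 z = b ((U.card : ZMod 4)) + s := by
  rw [sum_symmDiff_two, sum_block b h, hs]

-- elements of `Hs` with different labels are Tc-related
lemma tc_of_label_ne {U W : Finset V} {s s' : ZMod 2} {l m : AbGround V b}
    (hl : l ∈ Hs b U W s) (hm : m ∈ Hs b U W s') (h : s ≠ s') : Tc b c l m := by
  rw [tc_same b c (hl.1.trans hm.1.symm)]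
  intro he
  exact h (by rw [← hl.2, ← hm.2, he])

lemma hs_nonempty {U W : Finset V} (hU : U ≠ ∅) (hW : W ≠ ∅) (hUW : U ≠ W)
    (t : ZMod 2) : ∃ l : AbGround V b, l ∈ Hs b U W t := by
  obtain ⟨φ, h1, h2⟩ := ex2 U W hU hW (sd_ne_empty hUW) (b ((U.card : ZMod 4))) t
  exact ⟨⟨(U, φ), h1⟩, rfl, h2⟩

lemma hs_nonempty3 {U W D : Finset V} (hU : U ≠ ∅) (hW : W ≠ ∅) (hD : D ≠ ∅)
    (hUW : U ∆ W ≠ ∅) (hUD : U ∆ D ≠ ∅) (hWD : W ∆ D ≠ ∅) (hUWD : U ∆ W ∆ D ≠ ∅)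
    (t d : ZMod 2) :
    ∃ l : AbGround V b, l ∈ Hs b U W t ∧ ∑ z ∈ D, l.1.2 z = d := by
  obtain ⟨φ, h1, h2, h3⟩ := ex3 U W D hU hW hD hUW hUD hWD hUWD
    (b ((U.card : ZMod 4))) t d
  exact ⟨⟨(U, φ), h1⟩, ⟨rfl, h2⟩, h3⟩

/-- The key polar computation: the polar of a half-block. -/
lemma polar_Hs (hb0 : b 0 = 1) {U W : Finset V}
    (hU : U ≠ ∅) (hW : W ≠ ∅) (hUW : U ≠ W) (t : ZMod 2) :
    polar (Tc b c) (Hs b U W t) = QQ b c U W (t + 1) := by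
  obtain ⟨l₀, hl₀⟩ := hs_nonempty b hU hW hUW t
  have hl₀U : l₀.1.1 = U := hl₀.1
  have hl₀W : ∑ z ∈ W, l₀.1.2 z = t := hl₀.2
  ext m
  constructor
  · intro hm
    by_cases hXU : m.1.1 = U
    · refine Or.inl (Or.inl ⟨hXU, ?_⟩)
      by_contra hne'
      exact tc_irrefl b c m (hm m ⟨hXU, z2_of_ne_succ hne'⟩)
    · by_cases hXD : m.1.1 = U ∆ W
      · refine Or.inl (Or.inr ⟨hXD, ?_⟩)
        have hT := hm l₀ hl₀
        rw [tc_diff b c (by rw [hl₀U, hXD]; exact sd_left_ne hW)] at hT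
        rw [hl₀U, hXD, symmDiff_symmDiff_cancel_left] at hT
        rw [Finset.sum_add_distrib, hl₀W] at hT
        exact z2_resolve hT
      · by_cases hXW : m.1.1 = W
        · refine Or.inr ⟨hXW, ?_⟩
          have hT := hm l₀ hl₀
          rw [tc_diff b c (by rw [hl₀U, hXW]; exact hUW)] at hT
          rw [hl₀U, hXW] at hT
          rw [Finset.sum_add_distrib, sum_sd_block b hl₀U hl₀W] at hT
          linear_combination z2_resolve hT
        · exfalso
          have hXne : m.1.1 ≠ ∅ := ground_ne b hb0 m
          have hD1 : U ∆ m.1.1 ≠ ∅ := sd_ne_empty (fun h => hXU h.symm)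
          have hUD : U ∆ (U ∆ m.1.1) ≠ ∅ := by
            rw [symmDiff_symmDiff_cancel_left]; exact hXne
          have hWD : W ∆ (U ∆ m.1.1) ≠ ∅ := by
            intro h
            have := symmDiff_eq_bot.mp (by simpa using h)
            apply hXD
            rw [← symmDiff_symmDiff_cancel_left U m.1.1, ← this]
          have hUWD : U ∆ W ∆ (U ∆ m.1.1) ≠ ∅ := by
            rw [sd_cross]
            exact sd_ne_empty (fun h => hXW h.symm)
          obtain ⟨l₁, hl₁m, hl₁D⟩ := hs_nonempty3 b hU hW hD1
            (sd_ne_empty hUW) hUD hWD hUWD t 0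
          obtain ⟨l₂, hl₂m, hl₂D⟩ := hs_nonempty3 b hU hW hD1
            (sd_ne_empty hUW) hUD hWD hUWD t 1
          have hT1 := hm l₁ hl₁m
          have hT2 := hm l₂ hl₂m
          rw [tc_diff b c (by rw [hl₁m.1]; exact fun h => hXU h.symm)] at hT1
          rw [tc_diff b c (by rw [hl₂m.1]; exact fun h => hXU h.symm)] at hT2
          rw [hl₁m.1, Finset.sum_add_distrib, hl₁D] at hT1
          rw [hl₂m.1, Finset.sum_add_distrib, hl₂D] at hT2
          exact z2_absurd hT1 hT2
  · intro hm l hl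
    rcases hm with (⟨hblk, hsum⟩ | ⟨hblk, hsum⟩) | ⟨hblk, hsum⟩
    · exact tc_of_label_ne b c hl ⟨hblk, hsum⟩ (z2_ne_succ' t)
    · rw [tc_diff b c (by rw [hl.1, hblk]; exact sd_left_ne hW)]
      rw [hl.1, hblk, symmDiff_symmDiff_cancel_left]
      rw [Finset.sum_add_distrib, hl.2, hsum]
      exact z2_comp2 _ _
    · rw [tc_diff b c (by rw [hl.1, hblk]; exact hUW)]
      rw [hl.1, hblk]
      rw [Finset.sum_add_distrib, sum_sd_block b hl.1 hl.2, hsum]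
      exact z2_comp3 _ _ _

end KS15
open scoped symmDiff
namespace KS15
set_option linter.unusedSectionVars false
variable {V : Type*} [Fintype V] [DecidableEq V] (b c : ZMod 4 → ZMod 2)

lemma z2_comp2' (t cw : ZMod 2) : cw + t + (t + 1) ≠ cw := by revert t cw; decide
lemma z2_comp3' (bu t cd : ZMod 2) : cd + bu + t + (bu + (t + 1)) ≠ cd := by
  revert bu t cd; decide
lemma z2_ne_add (a t : ZMod 2) : a + t ≠ a + (t + 1) := by revert a t; decide
lemma z2_ne_add3 (a d t : ZMod 2) : a + d + t ≠ a + d + (t + 1) := by revert a d t; decide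
lemma z2_star_cross (bu bw bd cu cw cd t : ZMod 2)
    (h : bu + bw + bd + cu + cw + cd = 0) :
    bd + (cw + t) + (bw + (cd + bu + (t + 1))) ≠ cu := by revert bu bw bd cu cw cd t; decide
lemma z2_star_cross2 (bu bw bd cu cw cd t : ZMod 2)
    (h : bu + bw + bd + cu + cw + cd = 0) :
    bw + (cd + bu + t) + (bd + (cw + (t + 1))) ≠ cu := by revert bu bw bd cu cw cd t; decide

lemma sd_wu (U W : Finset V) : W ∆ (U ∆ W) = U := by
  rw [symmDiff_comm U W, symmDiff_symmDiff_cancel_left]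

section
variable (hb0 : b 0 = 1) (hc0 : c 0 = 1) (hbc2 : b 2 + c 2 = 0)
  (hbc13 : b 1 + c 1 + b 3 + c 3 = 0)
variable {U W : Finset V} (hU : U ≠ ∅) (hW : W ≠ ∅) (hUW : U ≠ W)

include hb0 hc0 hbc2 hbc13 hU hW hUW in
lemma QQ_orth (t : ZMod 2) :
    ∀ l ∈ QQ b c U W t, ∀ m ∈ QQ b c U W (t + 1), Tc b c l m := by
  intro l hl m hm
  have hstar := star b c hb0 hc0 hbc2 hbc13 U W
  rcases hl with (hl | hl) | hl <;> rcases hm with (hm | hm) | hm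
  · exact tc_of_label_ne b c hl hm (z2_ne_succ' t)
  · rw [tc_diff b c (by rw [hl.1, hm.1]; exact sd_left_ne hW)]
    rw [hl.1, hm.1, symmDiff_symmDiff_cancel_left, Finset.sum_add_distrib, hl.2, hm.2]
    exact z2_comp2 _ _
  · rw [tc_diff b c (by rw [hl.1, hm.1]; exact hUW)]
    rw [hl.1, hm.1]
    rw [Finset.sum_add_distrib, sum_sd_block b hl.1 hl.2, hm.2]
    exact z2_comp3 _ _ _
  · rw [tc_diff b c (by rw [hl.1, hm.1]; exact Ne.symm (sd_left_ne hW))]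
    rw [hl.1, hm.1, symmDiff_comm (U ∆ W) U, symmDiff_symmDiff_cancel_left]
    rw [Finset.sum_add_distrib, hl.2, hm.2]
    exact z2_comp2' _ _
  · exact tc_of_label_ne b c hl hm (z2_ne_add _ _)
  · rw [tc_diff b c (by rw [hl.1, hm.1]; exact Ne.symm (sd_right_ne hU))]
    rw [hl.1, hm.1, symmDiff_symmDiff_cancel_right]
    rw [Finset.sum_add_distrib]
    have hA := sum_sd_block b hl.1 hl.2
    rw [symmDiff_symmDiff_cancel_right] at hA
    have hB := sum_sd_block b hm.1 hm.2
    rw [sd_wu] at hB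
    rw [hA, hB]
    exact z2_star_cross _ _ _ _ _ _ _ hstar
  · rw [tc_diff b c (by rw [hl.1, hm.1]; exact fun h => hUW h.symm)]
    rw [hl.1, hm.1, symmDiff_comm W U]
    rw [Finset.sum_add_distrib, hl.2, sum_sd_block b hm.1 hm.2]
    exact z2_comp3' _ _ _
  · rw [tc_diff b c (by rw [hl.1, hm.1]; exact sd_right_ne hU)]
    rw [hl.1, hm.1, sd_wu]
    rw [Finset.sum_add_distrib]
    have hA := sum_sd_block b hl.1 hl.2
    rw [sd_wu] at hA
    have hB := sum_sd_block b hm.1 hm.2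
    rw [symmDiff_symmDiff_cancel_right] at hB
    rw [hA, hB]
    exact z2_star_cross2 _ _ _ _ _ _ _ hstar
  · exact tc_of_label_ne b c hl hm (z2_ne_add3 _ _ _)

include hb0 hc0 hbc2 hbc13 hU hW hUW in
lemma polar_QQ (t : ZMod 2) :
    polar (Tc b c) (QQ b c U W t) = QQ b c U W (t + 1) := by
  apply Set.Subset.antisymm
  · have h1 : Hs b U W t ⊆ QQ b c U W t := fun l hl => Or.inl (Or.inl hl)
    have h2 := polar_anti b c h1
    rw [polar_Hs b c hb0 hU hW hUW t] at h2
    exact h2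
  · intro m hm l hl
    exact QQ_orth b c hb0 hc0 hbc2 hbc13 hU hW hUW t l hl m hm

include hb0 hc0 hbc2 hbc13 hU hW hUW in
lemma polar_polar_Hs (t : ZMod 2) :
    polar (Tc b c) (polar (Tc b c) (Hs b U W t)) = polar (Tc b c) (Hs b U W (t + 1)) := by
  rw [polar_Hs b c hb0 hU hW hUW t, polar_QQ b c hb0 hc0 hbc2 hbc13 hU hW hUW,
    polar_Hs b c hb0 hU hW hUW (t + 1)]

include hU hW hUW in
lemma QQ_inter (t : ZMod 2) : QQ b c U W t ∩ QQ b c U W (t + 1) = ∅ := by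
  ext l
  simp only [Set.mem_inter_iff, Set.mem_empty_iff_false, iff_false]
  rintro ⟨(hl | hl) | hl, (hm | hm) | hm⟩
  · exact z2_ne_succ' t (hl.2.symm.trans hm.2)
  · exact sd_left_ne hW (hl.1.symm.trans hm.1)
  · exact hUW (hl.1.symm.trans hm.1)
  · exact sd_left_ne hW (hm.1.symm.trans hl.1)
  · exact z2_ne_add (c ((W.card : ZMod 4))) t (hl.2.symm.trans hm.2)
  · exact sd_right_ne hU (hm.1.symm.trans hl.1)
  · exact hUW (hm.1.symm.trans hl.1)
  · exact sd_right_ne hU (hl.1.symm.trans hm.1)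
  · exact z2_ne_add3 (c (((U ∆ W).card : ZMod 4))) (b ((U.card : ZMod 4))) t
      (hl.2.symm.trans hm.2)
end

-- PTset facts
lemma block_PTset (U : Finset V) (S : Set (AbGround V b))
    (h : ∀ l ∈ S, l.1.1 = U) : S ∈ PTset (Tc b c) := by
  intro l hl l₁ hl₁ hne
  rw [tc_same b c ((h l hl).trans (h l₁ hl₁).symm)]
  intro he
  apply hne
  apply Subtype.ext
  exact Prod.ext ((h l₁ hl₁).trans (h l hl).symm) he.symm

lemma Hs_PTset (U W : Finset V) (t : ZMod 2) : Hs b U W t ∈ PTset (Tc b c) :=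
  block_PTset b c U _ (fun _ hl => hl.1)

lemma QQ_PTup (hb0 : b 0 = 1) {U W : Finset V} (hU : U ≠ ∅) (hW : W ≠ ∅)
    (hUW : U ≠ W) (t : ZMod 2) : QQ b c U W t ∈ PTup (Tc b c) := by
  refine ⟨Hs b U W (t + 1), Hs_PTset b c U W (t + 1), ?_⟩
  rw [polar_Hs b c hb0 hU hW hUW (t + 1), z2_two t]

end KS15
open scoped symmDiff
namespace KS15
set_option linter.unusedSectionVars false
variable {V : Type*} [Fintype V] [DecidableEq V] (b c : ZMod 4 → ZMod 2)

lemma z2_absurd' {x y S v : ZMod 2} (h : x ≠ y) (h1 : x + S ≠ v) (h2 : y + S ≠ v) :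
    False := by revert x y S v; decide

def Bl (U : Finset V) : Set (AbGround V b) := {l | l.1.1 = U}

def Rq (U W₁ W₂ : Finset V) (t₁ t₂ : ZMod 2) : Set (AbGround V b) :=
  {l | l.1.1 = U ∧ ∑ z ∈ W₁, l.1.2 z = t₁ ∧ ∑ z ∈ W₂, l.1.2 z = t₂}

section
variable {U W₁ W₂ : Finset V}
variable (hb0 : b 0 = 1)
variable (hU : U ≠ ∅) (h1 : W₁ ≠ ∅) (h2 : W₂ ≠ ∅)
  (hU1 : U ∆ W₁ ≠ ∅) (hU2 : U ∆ W₂ ≠ ∅) (h12 : W₁ ∆ W₂ ≠ ∅)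
  (hU12 : U ∆ W₁ ∆ W₂ ≠ ∅)

include hU h1 h2 hU1 hU2 h12 hU12 in
lemma Rq_nonempty (t₁ t₂ : ZMod 2) :
    ∃ l : AbGround V b, l ∈ Rq b U W₁ W₂ t₁ t₂ := by
  obtain ⟨φ, hφU, hφ1, hφ2⟩ := ex3 U W₁ W₂ hU h1 h2 hU1 hU2 h12 hU12
    (b ((U.card : ZMod 4))) t₁ t₂
  exact ⟨⟨(U, φ), hφU⟩, rfl, hφ1, hφ2⟩

lemma Rq_label_ne {t₁ t₂ s₁ s₂ : ZMod 2} (h : (t₁, t₂) ≠ (s₁, s₂))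
    {l m : AbGround V b} (hl : l ∈ Rq b U W₁ W₂ t₁ t₂)
    (hm : m ∈ Rq b U W₁ W₂ s₁ s₂) : Tc b c l m := by
  rw [tc_same b c (hl.1.trans hm.1.symm)]
  intro he
  apply h
  have e1 : t₁ = s₁ := by rw [← hl.2.1, ← hm.2.1, he]
  have e2 : t₂ = s₂ := by rw [← hl.2.2, ← hm.2.2, he]
  rw [e1, e2]

lemma mem_compl_Rq {t₁ t₂ s₁ s₂ : ZMod 2} (h : (s₁, s₂) ≠ (t₁, t₂))
    {l : AbGround V b} (hl : l ∈ Rq b U W₁ W₂ s₁ s₂) :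
    l ∈ Bl b U \ Rq b U W₁ W₂ t₁ t₂ := by
  refine ⟨hl.1, fun hr => h ?_⟩
  have e1 : s₁ = t₁ := hl.2.1.symm.trans hr.2.1
  have e2 : s₂ = t₂ := hl.2.2.symm.trans hr.2.2
  rw [e1, e2]

include hb0 hU h1 h2 hU1 hU2 h12 hU12 in
lemma polar_compl_Rq (t₁ t₂ : ZMod 2) :
    polar (Tc b c) (Bl b U \ Rq b U W₁ W₂ t₁ t₂) = Rq b U W₁ W₂ t₁ t₂ := by
  ext m
  constructor
  · intro hm
    by_cases hXU : m.1.1 = U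
    · by_cases hr : m ∈ Rq b U W₁ W₂ t₁ t₂
      · exact hr
      · exact absurd (hm m ⟨hXU, hr⟩) (tc_irrefl b c m)
    · exfalso
      -- two elements of the complement with different D-sums
      set D := U ∆ m.1.1 with hD
      have hDne : D ≠ ∅ := sd_ne_empty (fun h => hXU h.symm)
      have hUD : U ∆ D ≠ ∅ := by
        rw [hD, symmDiff_symmDiff_cancel_left]
        exact ground_ne b hb0 m
      -- helper to finish given two complement elements with different D-sums
      have finish : ∀ lA lB : AbGround V b,
          lA ∈ Bl b U \ Rq b U W₁ W₂ t₁ t₂ → lB ∈ Bl b U \ Rq b U W₁ W₂ t₁ t₂ →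
          ∀ dA dB : ZMod 2, dA ≠ dB →
          ∑ z ∈ D, lA.1.2 z = dA → ∑ z ∈ D, lB.1.2 z = dB → False := by
        intro lA lB hA hB dA dB hne hdA hdB
        have hTA := hm lA hA
        have hTB := hm lB hB
        rw [tc_diff b c (by rw [hA.1]; exact fun h => hXU h.symm)] at hTA
        rw [tc_diff b c (by rw [hB.1]; exact fun h => hXU h.symm)] at hTB
        rw [hA.1, Finset.sum_add_distrib, ← hD, hdA] at hTA
        rw [hB.1, Finset.sum_add_distrib, ← hD, hdB] at hTB
        exact z2_absurd' hne hTA hTB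
      -- case analysis on whether D is in the span of U, W₁, W₂
      by_cases hc1 : D = W₁
      · obtain ⟨lA, hA⟩ := Rq_nonempty b hU h1 h2 hU1 hU2 h12 hU12 (t₁ + 1) t₂
        obtain ⟨lB, hB⟩ := Rq_nonempty b hU h1 h2 hU1 hU2 h12 hU12 t₁ (t₂ + 1)
        exact finish lA lB (mem_compl_Rq b (by simp [z2_ne_succ']) hA)
          (mem_compl_Rq b (by simp [z2_ne_succ']) hB) (t₁ + 1) t₁ (fun h => z2_ne_succ' t₁ h.symm)
          (by rw [hc1]; exact hA.2.1) (by rw [hc1]; exact hB.2.1)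
      · by_cases hc2 : D = W₂
        · obtain ⟨lA, hA⟩ := Rq_nonempty b hU h1 h2 hU1 hU2 h12 hU12 (t₁ + 1) (t₂ + 1)
          obtain ⟨lB, hB⟩ := Rq_nonempty b hU h1 h2 hU1 hU2 h12 hU12 (t₁ + 1) t₂
          exact finish lA lB (mem_compl_Rq b (by simp [z2_ne_succ']) hA)
            (mem_compl_Rq b (by simp [z2_ne_succ']) hB) (t₂ + 1) t₂
            (fun h => z2_ne_succ' t₂ h.symm)
            (by rw [hc2]; exact hA.2.2) (by rw [hc2]; exact hB.2.2)
        · by_cases hc3 : D = W₁ ∆ W₂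
          · obtain ⟨lA, hA⟩ := Rq_nonempty b hU h1 h2 hU1 hU2 h12 hU12 (t₁ + 1) t₂
            obtain ⟨lB, hB⟩ := Rq_nonempty b hU h1 h2 hU1 hU2 h12 hU12 (t₁ + 1) (t₂ + 1)
            refine finish lA lB (mem_compl_Rq b (by simp [z2_ne_succ']) hA)
              (mem_compl_Rq b (by simp [z2_ne_succ']) hB)
              (t₁ + 1 + t₂) (t₁ + 1 + (t₂ + 1)) (z2_ne_add _ _) ?_ ?_
            · rw [hc3, sum_symmDiff_two, hA.2.1, hA.2.2]
            · rw [hc3, sum_symmDiff_two, hB.2.1, hB.2.2]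
          · by_cases hc4 : D = U ∆ W₁
            · obtain ⟨lA, hA⟩ := Rq_nonempty b hU h1 h2 hU1 hU2 h12 hU12 (t₁ + 1) t₂
              obtain ⟨lB, hB⟩ := Rq_nonempty b hU h1 h2 hU1 hU2 h12 hU12 t₁ (t₂ + 1)
              refine finish lA lB (mem_compl_Rq b (by simp [z2_ne_succ']) hA)
                (mem_compl_Rq b (by simp [z2_ne_succ']) hB)
                (b ((U.card : ZMod 4)) + (t₁ + 1)) (b ((U.card : ZMod 4)) + t₁)
                (z2_ne_add _ _ ∘ Eq.symm) ?_ ?_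
              · rw [hc4]; exact sum_sd_block b hA.1 hA.2.1
              · rw [hc4]; exact sum_sd_block b hB.1 hB.2.1
            · by_cases hc5 : D = U ∆ W₂
              · obtain ⟨lA, hA⟩ := Rq_nonempty b hU h1 h2 hU1 hU2 h12 hU12 (t₁ + 1) (t₂ + 1)
                obtain ⟨lB, hB⟩ := Rq_nonempty b hU h1 h2 hU1 hU2 h12 hU12 (t₁ + 1) t₂
                refine finish lA lB (mem_compl_Rq b (by simp [z2_ne_succ']) hA)
                  (mem_compl_Rq b (by simp [z2_ne_succ']) hB)
                  (b ((U.card : ZMod 4)) + (t₂ + 1)) (b ((U.card : ZMod 4)) + t₂)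
                  (z2_ne_add _ _ ∘ Eq.symm) ?_ ?_
                · rw [hc5]; exact sum_sd_block b hA.1 hA.2.2
                · rw [hc5]; exact sum_sd_block b hB.1 hB.2.2
              · by_cases hc6 : D = U ∆ (W₁ ∆ W₂)
                · obtain ⟨lA, hA⟩ := Rq_nonempty b hU h1 h2 hU1 hU2 h12 hU12 (t₁ + 1) t₂
                  obtain ⟨lB, hB⟩ := Rq_nonempty b hU h1 h2 hU1 hU2 h12 hU12 (t₁ + 1) (t₂ + 1)
                  refine finish lA lB (mem_compl_Rq b (by simp [z2_ne_succ']) hA)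
                    (mem_compl_Rq b (by simp [z2_ne_succ']) hB)
                    (b ((U.card : ZMod 4)) + (t₁ + 1 + t₂))
                    (b ((U.card : ZMod 4)) + (t₁ + 1 + (t₂ + 1)))
                    (fun h => z2_ne_add _ _ (add_left_cancel h)) ?_ ?_
                  · have hsA : ∑ z ∈ W₁ ∆ W₂, lA.1.2 z = t₁ + 1 + t₂ := by
                      rw [sum_symmDiff_two, hA.2.1, hA.2.2]
                    rw [hc6]
                    exact sum_sd_block b hA.1 hsA
                  · have hsB : ∑ z ∈ W₁ ∆ W₂, lB.1.2 z = t₁ + 1 + (t₂ + 1) := by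
                      rw [sum_symmDiff_two, hB.2.1, hB.2.2]
                    rw [hc6]
                    exact sum_sd_block b hB.1 hsB
                · -- independent case
                  obtain ⟨φA, hφAU, hφA1, hφA2, hφAD⟩ := ex4 U W₁ W₂ D hU h1 h2 hDne
                    hU1 hU2 hUD h12
                    (sd_ne_empty (fun h => hc1 h.symm)) (sd_ne_empty (fun h => hc2 h.symm))
                    hU12 (sd_ne_empty (fun h => hc4 h.symm)) (sd_ne_empty (fun h => hc5 h.symm))
                    (sd_ne_empty (fun h => hc3 h.symm))
                    (by
                      rw [symmDiff_assoc U W₁ W₂]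
                      exact sd_ne_empty (fun h => hc6 h.symm))
                    (b ((U.card : ZMod 4))) (t₁ + 1) t₂ 0
                  obtain ⟨φB, hφBU, hφB1, hφB2, hφBD⟩ := ex4 U W₁ W₂ D hU h1 h2 hDne
                    hU1 hU2 hUD h12
                    (sd_ne_empty (fun h => hc1 h.symm)) (sd_ne_empty (fun h => hc2 h.symm))
                    hU12 (sd_ne_empty (fun h => hc4 h.symm)) (sd_ne_empty (fun h => hc5 h.symm))
                    (sd_ne_empty (fun h => hc3 h.symm))
                    (by
                      rw [symmDiff_assoc U W₁ W₂]
                      exact sd_ne_empty (fun h => hc6 h.symm))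
                    (b ((U.card : ZMod 4))) (t₁ + 1) t₂ 1
                  refine finish ⟨(U, φA), hφAU⟩ ⟨(U, φB), hφBU⟩
                    (mem_compl_Rq b (by simp [z2_ne_succ']) ⟨rfl, hφA1, hφA2⟩)
                    (mem_compl_Rq b (by simp [z2_ne_succ']) ⟨rfl, hφB1, hφB2⟩)
                    0 1 (by decide) hφAD hφBD
  · intro hm l hl
    have : m ∈ Rq b U W₁ W₂ t₁ t₂ := hm
    rw [tc_same b c (hl.1.trans this.1.symm)]
    intro he
    exact hl.2 ⟨hl.1, by rw [he]; exact this.2.1, by rw [he]; exact this.2.2⟩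

include hb0 hU h1 h2 hU1 hU2 h12 hU12 in
lemma Rq_PTup (t₁ t₂ : ZMod 2) : Rq b U W₁ W₂ t₁ t₂ ∈ PTup (Tc b c) := by
  refine ⟨Bl b U \ Rq b U W₁ W₂ t₁ t₂, block_PTset b c U _ (fun l hl => hl.1), ?_⟩
  exact polar_compl_Rq b c hb0 hU h1 h2 hU1 hU2 h12 hU12 t₁ t₂

-- union lemmas
lemma Rq_union1 (t₁ : ZMod 2) :
    Rq b U W₁ W₂ t₁ 0 ∪ Rq b U W₁ W₂ t₁ 1 = Hs b U W₁ t₁ := by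
  ext l
  constructor
  · rintro (h | h) <;> exact ⟨h.1, h.2.1⟩
  · intro h
    rcases z2cases (∑ z ∈ W₂, l.1.2 z) with h2 | h2
    · exact Or.inl ⟨h.1, h.2, h2⟩
    · exact Or.inr ⟨h.1, h.2, h2⟩

lemma Rq_union2 (t₂ : ZMod 2) :
    Rq b U W₁ W₂ 0 t₂ ∪ Rq b U W₁ W₂ 1 t₂ = Hs b U W₂ t₂ := by
  ext l
  constructor
  · rintro (h | h) <;> exact ⟨h.1, h.2.2⟩
  · intro h
    rcases z2cases (∑ z ∈ W₁, l.1.2 z) with h2 | h2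
    · exact Or.inl ⟨h.1, h2, h.2⟩
    · exact Or.inr ⟨h.1, h2, h.2⟩

lemma Rq_union3 :
    Rq b U W₁ W₂ 0 0 ∪ Rq b U W₁ W₂ 1 1 = Hs b U (W₁ ∆ W₂) 0 := by
  ext l
  constructor
  · rintro (h | h) <;>
      exact ⟨h.1, by rw [sum_symmDiff_two, h.2.1, h.2.2]; decide⟩
  · intro h
    have hsum : ∑ z ∈ W₁, l.1.2 z + ∑ z ∈ W₂, l.1.2 z = 0 := by
      rw [← sum_symmDiff_two]; exact h.2
    rcases z2cases (∑ z ∈ W₁, l.1.2 z) with h1' | h1'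
    · refine Or.inl ⟨h.1, h1', ?_⟩
      rw [h1'] at hsum; linear_combination hsum
    · refine Or.inr ⟨h.1, h1', ?_⟩
      rw [h1'] at hsum; linear_combination hsum - z2_add_self 1
end
end KS15
open scoped symmDiff
namespace KS15
set_option linter.unusedSectionVars false
variable {V : Type*} [Fintype V] [DecidableEq V] (b c : ZMod 4 → ZMod 2)

lemma z2_move {a x s : ZMod 2} (h : a + x = s) : x = s + a := by
  revert a x s; decide

lemma sum_unsd {X Y : Finset V} {l : AbGround V b} {v : ZMod 2}
    (h : l.1.1 = X) (hv : ∑ z ∈ X ∆ Y, l.1.2 z = v) :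
    ∑ z ∈ Y, l.1.2 z = v + b ((X.card : ZMod 4)) := by
  have h2 := sum_symmDiff_two l.1.2 X Y
  rw [hv, sum_block b h] at h2
  exact z2_move h2.symm

section
variable {U W : Finset V}
variable (hb0 : b 0 = 1) (hc0 : c 0 = 1) (hbc2 : b 2 + c 2 = 0)
  (hbc13 : b 1 + c 1 + b 3 + c 3 = 0)

include hb0 hc0 hbc2 hbc13 in
lemma QQ_S1 (t : ZMod 2) :
    QQ b c U W t = QQ b c W U
      (t + c (((U ∆ W).card : ZMod 4)) + b ((U.card : ZMod 4)) + b ((W.card : ZMod 4))) := by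
  have star' := star b c hb0 hc0 hbc2 hbc13 U W
  ext l
  simp only [QQ, Set.mem_union]
  rw [symmDiff_comm W U]
  constructor
  · rintro ((⟨hb', hs⟩ | ⟨hb', hs⟩) | ⟨hb', hs⟩)
    · refine Or.inr ⟨hb', ?_⟩
      rw [sum_sd_block b hb' hs]
      exact (by decide : ∀ bu bw cd t : ZMod 2,
        bu + t = cd + bw + (t + cd + bu + bw)) _ _ _ _
    · refine Or.inl (Or.inr ⟨hb', ?_⟩)
      have hval := sum_sd_block b hb' hs
      rw [symmDiff_symmDiff_cancel_right] at hval
      rw [hval]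
      exact (by decide : ∀ bu bw bd cu cw cd t : ZMod 2,
        bu + bw + bd + cu + cw + cd = 0 →
        bd + (cw + t) = cu + (t + cd + bu + bw)) _ _ _ _ _ _ _ star'
    · refine Or.inl (Or.inl ⟨hb', ?_⟩)
      have hval := sum_sd_block b hb' hs
      rw [sd_wu] at hval
      rw [hval]
      exact (by decide : ∀ bu bw cd t : ZMod 2,
        bw + (cd + bu + t) = t + cd + bu + bw) _ _ _ _
  · rintro ((⟨hb', hs⟩ | ⟨hb', hs⟩) | ⟨hb', hs⟩)
    · refine Or.inr ⟨hb', ?_⟩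
      have hval := sum_sd_block b hb' hs
      rw [symmDiff_comm W U] at hval
      rw [hval]
      exact (by decide : ∀ bu bw cd t : ZMod 2,
        bw + (t + cd + bu + bw) = cd + bu + t) _ _ _ _
    · refine Or.inl (Or.inr ⟨hb', ?_⟩)
      have hval := sum_sd_block b hb' hs
      rw [symmDiff_comm (U ∆ W) U, symmDiff_symmDiff_cancel_left] at hval
      rw [hval]
      exact (by decide : ∀ bu bw bd cu cw cd t : ZMod 2,
        bu + bw + bd + cu + cw + cd = 0 →
        bd + (cu + (t + cd + bu + bw)) = cw + t) _ _ _ _ _ _ _ star'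
    · refine Or.inl (Or.inl ⟨hb', ?_⟩)
      have hval := sum_unsd b hb' hs
      rw [hval]
      exact (by decide : ∀ bu bw cd t : ZMod 2,
        cd + bw + (t + cd + bu + bw) + bu = t) _ _ _ _

include hb0 hc0 hbc2 hbc13 in
lemma QQ_S2 (t : ZMod 2) :
    QQ b c U W t = QQ b c (U ∆ W) W (t + c ((W.card : ZMod 4))) := by
  have star' := star b c hb0 hc0 hbc2 hbc13 U W
  ext l
  simp only [QQ, Set.mem_union]
  rw [symmDiff_symmDiff_cancel_right W U]
  constructor
  · rintro ((⟨hb', hs⟩ | ⟨hb', hs⟩) | ⟨hb', hs⟩)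
    · refine Or.inl (Or.inr ⟨hb', ?_⟩)
      rw [hs]
      exact (by decide : ∀ cw t : ZMod 2, t = cw + (t + cw)) _ _
    · refine Or.inl (Or.inl ⟨hb', ?_⟩)
      rw [hs]
      exact (by decide : ∀ cw t : ZMod 2, cw + t = t + cw) _ _
    · refine Or.inr ⟨hb', ?_⟩
      have hval := sum_sd_block b hb' hs
      rw [sd_wu] at hval
      rw [hval]
      exact (by decide : ∀ bu bw bd cu cw cd t : ZMod 2,
        bu + bw + bd + cu + cw + cd = 0 →
        bw + (cd + bu + t) = cu + bd + (t + cw)) _ _ _ _ _ _ _ star'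
  · rintro ((⟨hb', hs⟩ | ⟨hb', hs⟩) | ⟨hb', hs⟩)
    · refine Or.inl (Or.inr ⟨hb', ?_⟩)
      rw [hs]
      exact (by decide : ∀ cw t : ZMod 2, t + cw = cw + t) _ _
    · refine Or.inl (Or.inl ⟨hb', ?_⟩)
      rw [hs]
      exact (by decide : ∀ cw t : ZMod 2, cw + (t + cw) = t) _ _
    · refine Or.inr ⟨hb', ?_⟩
      have hval := sum_sd_block b hb' hs
      rw [symmDiff_comm W U] at hval
      rw [hval]
      exact (by decide : ∀ bu bw bd cu cw cd t : ZMod 2,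
        bu + bw + bd + cu + cw + cd = 0 →
        bw + (cu + bd + (t + cw)) = cd + bu + t) _ _ _ _ _ _ _ star'

lemma QQ_S3 (t : ZMod 2) :
    QQ b c U W t = QQ b c U (U ∆ W) (t + b ((U.card : ZMod 4))) := by
  ext l
  simp only [QQ, Set.mem_union]
  rw [symmDiff_symmDiff_cancel_left U W]
  constructor
  · rintro ((⟨hb', hs⟩ | ⟨hb', hs⟩) | ⟨hb', hs⟩)
    · refine Or.inl (Or.inl ⟨hb', ?_⟩)
      rw [sum_sd_block b hb' hs]
      exact (by decide : ∀ bu t : ZMod 2, bu + t = t + bu) _ _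
    · refine Or.inr ⟨hb', ?_⟩
      rw [hs]
      exact (by decide : ∀ bu cw t : ZMod 2, cw + t = cw + bu + (t + bu)) _ _ _
    · refine Or.inl (Or.inr ⟨hb', ?_⟩)
      rw [hs]
      exact (by decide : ∀ bu cd t : ZMod 2, cd + bu + t = cd + (t + bu)) _ _ _
  · rintro ((⟨hb', hs⟩ | ⟨hb', hs⟩) | ⟨hb', hs⟩)
    · refine Or.inl (Or.inl ⟨hb', ?_⟩)
      have hval := sum_unsd b hb' hs
      rw [hval]
      exact (by decide : ∀ bu t : ZMod 2, t + bu + bu = t) _ _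
    · refine Or.inr ⟨hb', ?_⟩
      rw [hs]
      exact (by decide : ∀ bu cd t : ZMod 2, cd + (t + bu) = cd + bu + t) _ _ _
    · refine Or.inl (Or.inr ⟨hb', ?_⟩)
      rw [hs]
      exact (by decide : ∀ bu cw t : ZMod 2, cw + bu + (t + bu) = cw + t) _ _ _
end
end KS15
open scoped symmDiff
namespace KS15
set_option linter.unusedSectionVars false
variable {V : Type*} [Fintype V] [DecidableEq V] (b c : ZMod 4 → ZMod 2)

lemma ne_of_sd {X Y : Finset V} (h : X ∆ Y ≠ ∅) : X ≠ Y :=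
  fun he => h (by simp [he])

lemma z2_swap {x y : ZMod 2} (h : x + y = 1) : y = x + 1 := by revert x y; decide

section
variable (f : Set (AbGround V b) → ZMod 2)
variable (hb0 : b 0 = 1) (hc0 : c 0 = 1) (hbc2 : b 2 + c 2 = 0)
  (hbc13 : b 1 + c 1 + b 3 + c 3 = 0)
variable (huniv : f Set.univ = 1)
variable (hax : ∀ Q ∈ PTup (Tc b c), ∀ Q₁ ∈ PTup (Tc b c),
    Q₁ ⊆ polar (Tc b c) Q →
    f (polar (Tc b c) (polar (Tc b c) (Q ∪ Q₁))) = f Q + f Q₁)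

include hb0 hc0 hbc2 hbc13 huniv hax in
lemma line_sum {U W : Finset V} (hU : U ≠ ∅) (hW : W ≠ ∅) (hUW : U ≠ W) :
    f (QQ b c U W 0) + f (QQ b c U W 1) = 1 := by
  have e1 : (0 : ZMod 2) + 1 = 1 := by decide
  have e2 : (1 : ZMod 2) + 1 = 0 := by decide
  have hsub : QQ b c U W 1 ⊆ polar (Tc b c) (QQ b c U W 0) := by
    rw [polar_QQ b c hb0 hc0 hbc2 hbc13 hU hW hUW 0, e1]
  have h := hax (QQ b c U W 0) (QQ_PTup b c hb0 hU hW hUW 0)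
    (QQ b c U W 1) (QQ_PTup b c hb0 hU hW hUW 1) hsub
  rw [polar_union, polar_QQ b c hb0 hc0 hbc2 hbc13 hU hW hUW 0,
    polar_QQ b c hb0 hc0 hbc2 hbc13 hU hW hUW 1, e1, e2] at h
  have hint : QQ b c U W 1 ∩ QQ b c U W 0 = ∅ := by
    rw [Set.inter_comm]
    have := QQ_inter b c hU hW hUW 0
    rw [e1] at this
    exact this
  rw [hint, polar_empty, huniv] at h
  exact h.symm

include hb0 hc0 hbc2 hbc13 huniv hax in
lemma QQ_shift {U W : Finset V} (hU : U ≠ ∅) (hW : W ≠ ∅) (hUW : U ≠ W) (t : ZMod 2) :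
    f (QQ b c U W t) = f (QQ b c U W 0) + t := by
  rcases z2cases t with rfl | rfl
  · rw [add_zero]
  · exact z2_swap (line_sum b c f hb0 hc0 hbc2 hbc13 huniv hax hU hW hUW)

lemma z2_comb (x y z w q00 q01 q10 q11 : ZMod 2) (hx : x = q00 + q01)
    (hw : w = q10 + q11) (hy : y = q00 + q10) (hz : z = q00 + q11)
    (hline : x + w = 1) : x + y + z = 1 := by
  subst hx hw hy hz
  linear_combination hline + z2_add_self q00

include hb0 hc0 hbc2 hbc13 huniv hax in
lemma add_rel {U W₁ W₂ : Finset V}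
    (hU : U ≠ ∅) (h1 : W₁ ≠ ∅) (h2 : W₂ ≠ ∅)
    (hU1 : U ∆ W₁ ≠ ∅) (hU2 : U ∆ W₂ ≠ ∅) (h12 : W₁ ∆ W₂ ≠ ∅)
    (hU12 : U ∆ W₁ ∆ W₂ ≠ ∅) :
    f (QQ b c U W₁ 0) + f (QQ b c U W₂ 0) + f (QQ b c U (W₁ ∆ W₂) 0) = 1 := by
  have e1 : (0 : ZMod 2) + 1 = 1 := by decide
  have e2 : (1 : ZMod 2) + 1 = 0 := by decide
  have hUW₁ : U ≠ W₁ := ne_of_sd hU1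
  have hUW₂ : U ≠ W₂ := ne_of_sd hU2
  have hUW12 : U ≠ W₁ ∆ W₂ := by
    intro he
    exact hU12 (by rw [symmDiff_assoc, ← he, symmDiff_self]; simp)
  have hPT : ∀ t₁ t₂ : ZMod 2, Rq b U W₁ W₂ t₁ t₂ ∈ PTup (Tc b c) :=
    fun t₁ t₂ => Rq_PTup b c hb0 hU h1 h2 hU1 hU2 h12 hU12 t₁ t₂
  have hsub : ∀ t₁ t₂ s₁ s₂ : ZMod 2, (t₁, t₂) ≠ (s₁, s₂) →
      Rq b U W₁ W₂ s₁ s₂ ⊆ polar (Tc b c) (Rq b U W₁ W₂ t₁ t₂) :=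
    fun t₁ t₂ s₁ s₂ h l hl m hm => Rq_label_ne b c h hm hl
  have hpp : ∀ (W : Finset V), W ≠ ∅ → U ≠ W →
      polar (Tc b c) (polar (Tc b c) (Hs b U W 0)) = QQ b c U W 0 := by
    intro W hW hUW
    rw [polar_Hs b c hb0 hU hW hUW 0, polar_QQ b c hb0 hc0 hbc2 hbc13 hU hW hUW, e1, e2]
  have hA0 := hax _ (hPT 0 0) _ (hPT 0 1) (hsub 0 0 0 1
    (fun hp => (by decide : (0 : ZMod 2) ≠ 1) (congrArg Prod.snd hp)))
  rw [Rq_union1 b, hpp W₁ h1 hUW₁] at hA0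
  have hA1 := hax _ (hPT 1 0) _ (hPT 1 1) (hsub 1 0 1 1
    (fun hp => (by decide : (0 : ZMod 2) ≠ 1) (congrArg Prod.snd hp)))
  rw [Rq_union1 b, polar_Hs b c hb0 hU h1 hUW₁ 1, e2,
    polar_QQ b c hb0 hc0 hbc2 hbc13 hU h1 hUW₁ 0, e1] at hA1
  have hB0 := hax _ (hPT 0 0) _ (hPT 1 0) (hsub 0 0 1 0
    (fun hp => (by decide : (0 : ZMod 2) ≠ 1) (congrArg Prod.fst hp)))
  rw [Rq_union2 b, hpp W₂ h2 hUW₂] at hB0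
  have hC0 := hax _ (hPT 0 0) _ (hPT 1 1) (hsub 0 0 1 1
    (fun hp => (by decide : (0 : ZMod 2) ≠ 1) (congrArg Prod.fst hp)))
  rw [Rq_union3 b, hpp (W₁ ∆ W₂) h12 hUW12] at hC0
  have hline := line_sum b c f hb0 hc0 hbc2 hbc13 huniv hax hU h1 hUW₁
  rw [hA1] at hline
  exact z2_comb _ _ _ _ _ _ _ _ hA0 rfl hB0 hC0 hline
end
end KS15
open scoped symmDiff
namespace KS15
set_option linter.unusedSectionVars false
variable {V : Type*} [Fintype V] [DecidableEq V] (b c : ZMod 4 → ZMod 2)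

lemma sd_univ (X : Finset V) : (Finset.univ ∆ X : Finset V) = Xᶜ := by
  ext z
  by_cases h : z ∈ X <;> simp [Finset.mem_symmDiff, h]

lemma sd_univ_erase (i : V) : (Finset.univ ∆ (Finset.univ.erase i) : Finset V) = {i} := by
  rw [sd_univ, Finset.compl_erase, Finset.compl_univ, insert_empty_eq]

lemma sd_erase_single (i : V) : ((Finset.univ.erase i) ∆ {i} : Finset V) = Finset.univ := by
  ext z
  by_cases h : z = i <;> simp [Finset.mem_symmDiff, h]

lemma sd_single_erase (i : V) : (({i} : Finset V) ∆ (Finset.univ.erase i)) = Finset.univ := by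
  rw [symmDiff_comm, sd_erase_single]

lemma sd_disj_union {X Y : Finset V} (h : Disjoint X Y) : X ∆ Y = X ∪ Y := by
  have := Disjoint.symmDiff_eq_sup h
  simpa [Finset.sup_eq_union] using this

lemma erase_ne_empty {i : V} (h : 2 ≤ Fintype.card V) : (Finset.univ.erase i : Finset V) ≠ ∅ := by
  have : (Finset.univ.erase i : Finset V).card = Fintype.card V - 1 := by
    rw [Finset.card_erase_of_mem (Finset.mem_univ i), Finset.card_univ]
  intro he
  rw [he] at this
  simp at this
  omega

lemma single_ne_erase {i : V} : ({i} : Finset V) ≠ Finset.univ.erase i := by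
  intro he
  have h1 : i ∈ ({i} : Finset V) := Finset.mem_singleton_self i
  rw [he] at h1
  exact (Finset.notMem_erase i _) h1

lemma univ_ne_single {i : V} (h : 2 ≤ Fintype.card V) : (Finset.univ : Finset V) ≠ {i} := by
  intro he
  have := congrArg Finset.card he
  rw [Finset.card_univ, Finset.card_singleton] at this
  omega

lemma univ_ne_erase {i : V} (h : 1 ≤ Fintype.card V) :
    (Finset.univ : Finset V) ≠ Finset.univ.erase i := by
  intro he
  have h1 : i ∈ (Finset.univ : Finset V) := Finset.mem_univ i
  rw [he] at h1
  exact (Finset.notMem_erase i _) h1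

section
variable (f : Set (AbGround V b) → ZMod 2)
variable (hb0 : b 0 = 1) (hc0 : c 0 = 1) (hbc2 : b 2 + c 2 = 0)
  (hbc13 : b 1 + c 1 + b 3 + c 3 = 0)
variable (huniv : f Set.univ = 1)
variable (hax : ∀ Q ∈ PTup (Tc b c), ∀ Q₁ ∈ PTup (Tc b c),
    Q₁ ⊆ polar (Tc b c) Q →
    f (polar (Tc b c) (polar (Tc b c) (Q ∪ Q₁))) = f Q + f Q₁)

include hb0 hc0 hbc2 hbc13 huniv hax in
/-- additivity in the singleton context `{i}` -/
lemma claimIII (i : V) : ∀ W : Finset V, W ⊆ Finset.univ.erase i → W.Nonempty →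
    f (QQ b c {i} W 0)
      = (∑ j ∈ W, f (QQ b c {i} {j} 0)) + (W.card : ZMod 2) + 1 := by
  intro W
  induction W using Finset.induction_on with
  | empty => intro _ h; exact absurd rfl h.ne_empty
  | @insert k W hk IH =>
    intro hsub _
    have hki : k ≠ i := (Finset.mem_erase.mp (hsub (Finset.mem_insert_self k W))).1
    by_cases hWe : W = ∅
    · subst hWe
      simp only [insert_empty_eq, Finset.sum_singleton, Finset.card_singleton,
        Nat.cast_one]
      exact (z2_two _).symm
    · have hWne : W.Nonempty := Finset.nonempty_iff_ne_empty.mpr hWe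
      have hWsub : W ⊆ Finset.univ.erase i := (Finset.subset_insert k W).trans hsub
      have hiW : i ∉ W := fun h => (Finset.notMem_erase i _) (hWsub h)
      have hik : i ∉ ({k} : Finset V) := by simp [Ne.symm hki]
      have disiW : Disjoint ({i} : Finset V) W := Finset.disjoint_singleton_left.mpr hiW
      have disik : Disjoint ({i} : Finset V) {k} := Finset.disjoint_singleton_left.mpr hik
      have disWk : Disjoint W ({k} : Finset V) :=
        Finset.disjoint_singleton_right.mpr hk
      have hsdWk : W ∆ ({k} : Finset V) = insert k W := by
        rw [sd_disj_union disWk, Finset.union_comm, ← Finset.insert_eq]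
      have hadd := add_rel b c f hb0 hc0 hbc2 hbc13 huniv hax
        (U := {i}) (W₁ := W) (W₂ := {k})
        (Finset.singleton_ne_empty i) hWe (Finset.singleton_ne_empty k)
        (by
          rw [sd_disj_union disiW]
          exact Finset.nonempty_iff_ne_empty.mp ⟨i, Finset.mem_union_left _ (Finset.mem_singleton_self i)⟩)
        (by
          rw [sd_disj_union disik]
          exact Finset.nonempty_iff_ne_empty.mp ⟨i, Finset.mem_union_left _ (Finset.mem_singleton_self i)⟩)
        (by
          rw [hsdWk]
          exact Finset.nonempty_iff_ne_empty.mp ⟨k, Finset.mem_insert_self k W⟩)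
        (by
          rw [sd_disj_union disiW, sd_disj_union (by
            rw [Finset.disjoint_union_left]
            exact ⟨disik, disWk⟩)]
          exact Finset.nonempty_iff_ne_empty.mp
            ⟨i, Finset.mem_union_left _ (Finset.mem_union_left _ (Finset.mem_singleton_self i))⟩)
      rw [hsdWk] at hadd
      have hIH := IH hWsub hWne
      rw [Finset.sum_insert hk, Finset.card_insert_of_notMem hk, Nat.cast_add, Nat.cast_one]
      have hdis : Disjoint ({i} : Finset V) W := disiW
      linear_combination hadd + hIH
        - z2_add_self (f (QQ b c {i} W 0)) - z2_add_self (f (QQ b c {i} {k} 0))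

include hb0 hc0 hbc2 hbc13 huniv hax in
/-- additivity in the context `univ` -/
lemma claimI (z₀ : V) : ∀ W : Finset V, W ⊆ Finset.univ.erase z₀ → W.Nonempty →
    f (QQ b c Finset.univ W 0)
      = (∑ j ∈ W, f (QQ b c Finset.univ {j} 0)) + (W.card : ZMod 2) + 1 := by
  intro W
  induction W using Finset.induction_on with
  | empty => intro _ h; exact absurd rfl h.ne_empty
  | @insert k W hk IH =>
    intro hsub _
    have hkz : k ≠ z₀ := (Finset.mem_erase.mp (hsub (Finset.mem_insert_self k W))).1
    by_cases hWe : W = ∅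
    · subst hWe
      simp only [insert_empty_eq, Finset.sum_singleton, Finset.card_singleton,
        Nat.cast_one]
      exact (z2_two _).symm
    · have hWne : W.Nonempty := Finset.nonempty_iff_ne_empty.mpr hWe
      have hWsub : W ⊆ Finset.univ.erase z₀ := (Finset.subset_insert k W).trans hsub
      have hzW : z₀ ∉ W := fun h => (Finset.notMem_erase z₀ _) (hWsub h)
      have hzk : z₀ ∉ ({k} : Finset V) := by simp [Ne.symm hkz]
      have huniv_ne : (Finset.univ : Finset V) ≠ ∅ :=
        Finset.nonempty_iff_ne_empty.mp ⟨z₀, Finset.mem_univ z₀⟩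
      have hsdWk : W ∆ ({k} : Finset V) = insert k W := by
        rw [sd_disj_union (Finset.disjoint_singleton_right.mpr hk),
          Finset.union_comm, ← Finset.insert_eq]
      have hadd := add_rel b c f hb0 hc0 hbc2 hbc13 huniv hax
        (U := Finset.univ) (W₁ := W) (W₂ := {k})
        huniv_ne hWe (Finset.singleton_ne_empty k)
        (by
          rw [sd_univ]
          exact Finset.nonempty_iff_ne_empty.mp ⟨z₀, Finset.mem_compl.mpr hzW⟩)
        (by
          rw [sd_univ]
          exact Finset.nonempty_iff_ne_empty.mp ⟨z₀, Finset.mem_compl.mpr hzk⟩)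
        (by
          rw [hsdWk]
          exact Finset.nonempty_iff_ne_empty.mp ⟨k, Finset.mem_insert_self k W⟩)
        (by
          rw [sd_univ]
          refine Finset.nonempty_iff_ne_empty.mp ⟨z₀, ?_⟩
          rw [Finset.mem_symmDiff]
          exact Or.inl ⟨Finset.mem_compl.mpr hzW, hzk⟩)
      rw [hsdWk] at hadd
      have hIH := IH hWsub hWne
      rw [Finset.sum_insert hk, Finset.card_insert_of_notMem hk, Nat.cast_add, Nat.cast_one]
      linear_combination hadd + hIH
        - z2_add_self (f (QQ b c Finset.univ W 0))
        - z2_add_self (f (QQ b c Finset.univ {k} 0))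
end
end KS15

open KS15

set_option maxHeartbeats 1000000

/-- There is no bivaluation on the orthoalgebra `(𝒫^{T_c}(A_b), ⊕, ∅, A_b)`:
no map to the two-element Boolean effect algebra (identified with `ZMod 2`,
where `x ⊕ y` is defined iff not both `x = 1` and `y = 1`, and then equals `x + y`). -/
theorem stmt15 {V : Type*} [Fintype V] [DecidableEq V]
    (h4 : 4 ∣ Fintype.card V) (b c : ZMod 4 → ZMod 2)
    (hb0 : b 0 = 1) (hc0 : c 0 = 1) (hbc2 : b 2 + c 2 = 0)
    (hbc13 : b 1 + c 1 + b 3 + c 3 = 0) :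
    ¬ ∃ f : Set (AbGround V b) → ZMod 2,
      f ∅ = 0 ∧ f Set.univ = 1 ∧
      ∀ Q ∈ PTup (Tc (V := V) b c), ∀ Q₁ ∈ PTup (Tc (V := V) b c),
        Q₁ ⊆ polar (Tc (V := V) b c) Q →
        (¬ (f Q = 1 ∧ f Q₁ = 1)) ∧
        f (polar (Tc (V := V) b c) (polar (Tc (V := V) b c) (Q ∪ Q₁))) =
          f Q + f Q₁ := by
  rintro ⟨f, hf0, hfu, hax'⟩
  have hax : ∀ Q ∈ PTup (Tc (V := V) b c), ∀ Q₁ ∈ PTup (Tc (V := V) b c),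
      Q₁ ⊆ polar (Tc (V := V) b c) Q →
      f (polar (Tc (V := V) b c) (polar (Tc (V := V) b c) (Q ∪ Q₁))) = f Q + f Q₁ :=
    fun Q hQ Q₁ hQ₁ hs => (hax' Q hQ Q₁ hQ₁ hs).2
  by_cases hV0 : Fintype.card V = 0
  · have hE : IsEmpty V := Fintype.card_eq_zero_iff.mp hV0
    have hempty : (Set.univ : Set (AbGround V b)) = (∅ : Set (AbGround V b)) := by
      ext l
      refine ⟨fun _ => ?_, fun h => h.elim⟩
      exact ground_ne b hb0 l (Finset.eq_empty_of_isEmpty _)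
    rw [hempty, hf0] at hfu
    exact (by decide : (0 : ZMod 2) ≠ 1) hfu
  · have hnge : 4 ≤ Fintype.card V := Nat.le_of_dvd (Nat.pos_of_ne_zero hV0) h4
    obtain ⟨z0⟩ : Nonempty V := Fintype.card_pos_iff.mp (by omega)
    have hune : (Finset.univ : Finset V) ≠ ∅ :=
      Finset.nonempty_iff_ne_empty.mp ⟨z0, Finset.mem_univ z0⟩
    have hsne : ∀ i : V, ({i} : Finset V) ≠ ∅ := fun i => Finset.singleton_ne_empty i
    have hce : ∀ i : V, (Finset.univ.erase i).card = Fintype.card V - 1 := fun i => by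
      rw [Finset.card_erase_of_mem (Finset.mem_univ i), Finset.card_univ]
    have hene : ∀ i : V, (Finset.univ.erase i : Finset V) ≠ ∅ :=
      fun i => erase_ne_empty (by omega)
    have c4_univ : (((Finset.univ : Finset V).card : ℕ) : ZMod 4) = 0 := by
      rw [Finset.card_univ]
      exact (ZMod.natCast_eq_zero_iff (Fintype.card V) 4).mpr h4
    have c4_single : ∀ i : V, ((({i} : Finset V).card : ℕ) : ZMod 4) = 1 := fun i => by
      rw [Finset.card_singleton]; exact Nat.cast_one
    have c4_erase : ∀ i : V, (((Finset.univ.erase i).card : ℕ) : ZMod 4) = 3 := fun i => by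
      rw [hce i, ← ZMod.natCast_mod]
      have h3 : (Fintype.card V - 1) % 4 = 3 := by omega
      rw [h3]
      norm_num
    have c4_pair : ∀ i j : V, i ≠ j → ((({i} ∆ {j} : Finset V).card : ℕ) : ZMod 4) = 2 := by
      intro i j hij
      have hd : Disjoint ({i} : Finset V) {j} :=
        Finset.disjoint_singleton_left.mpr (by simp [hij])
      rw [sd_disj_union hd, Finset.card_union_of_disjoint hd,
        Finset.card_singleton, Finset.card_singleton]
      norm_num
    have c2_erase : ∀ i : V, (((Finset.univ.erase i).card : ℕ) : ZMod 2) = 1 := fun i => by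
      rw [hce i, ← ZMod.natCast_mod]
      have h1 : (Fintype.card V - 1) % 2 = 1 := by omega
      rw [h1]; exact Nat.cast_one
    have hnsing : ∀ i : V, (Finset.univ : Finset V) ≠ {i} :=
      fun i => univ_ne_single (by omega)
    have hsnd : ∀ i j : V, i ≠ j → ({i} : Finset V) ≠ {j} :=
      fun i j h he => h (Finset.singleton_injective he)
    have herase_ne_single : ∀ i : V, (Finset.univ.erase i : Finset V) ≠ {i} :=
      fun i => Ne.symm single_ne_erase
    -- Key A: the sum of the `Y univ {i}` is 1
    have hA : ∑ i : V, f (QQ b c Finset.univ {i} 0) = 1 := by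
      have h1 := claimI b c f hb0 hc0 hbc2 hbc13 hfu hax z0 (Finset.univ.erase z0)
        subset_rfl (Finset.nonempty_iff_ne_empty.mpr (hene z0))
      rw [c2_erase z0] at h1
      have hset : QQ b c Finset.univ (Finset.univ.erase z0) 0 = QQ b c Finset.univ {z0} 1 := by
        have h2 := QQ_S3 b c (U := Finset.univ) (W := Finset.univ.erase z0) 0
        rw [sd_univ_erase z0, c4_univ, hb0] at h2
        rw [(by decide : (0 : ZMod 2) + 1 = 1)] at h2
        exact h2
      have h3 : f (QQ b c Finset.univ (Finset.univ.erase z0) 0)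
          = f (QQ b c Finset.univ {z0} 0) + 1 := by
        rw [hset]
        exact QQ_shift b c f hb0 hc0 hbc2 hbc13 hfu hax hune (hsne z0) (hnsing z0) 1
      have h4' := Finset.sum_erase_add Finset.univ
        (fun j => f (QQ b c Finset.univ {j} 0)) (Finset.mem_univ z0)
      linear_combination h1 - h3 - h4'
        + z2_add_self (∑ j ∈ Finset.univ.erase z0, f (QQ b c Finset.univ {j} 0))
    -- per-point relation
    have hii : ∀ i : V, f (QQ b c Finset.univ {i} 0)
        = (∑ j ∈ Finset.univ.erase i, f (QQ b c {i} {j} 0)) + (1 + b 1 + b 3 + c 1) := by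
      intro i
      have h1 : QQ b c (Finset.univ.erase i) {i} 0 = QQ b c Finset.univ {i} (0 + c 1) := by
        have h := QQ_S2 b c hb0 hc0 hbc2 hbc13 (U := Finset.univ.erase i) (W := {i}) 0
        rw [sd_erase_single i, c4_single i] at h
        exact h
      have h1' : f (QQ b c Finset.univ {i} (0 + c 1)) = f (QQ b c Finset.univ {i} 0) + (0 + c 1) :=
        QQ_shift b c f hb0 hc0 hbc2 hbc13 hfu hax hune (hsne i) (hnsing i) (0 + c 1)
      have h2 : QQ b c {i} (Finset.univ.erase i) 0
          = QQ b c (Finset.univ.erase i) {i} (0 + 1 + b 1 + b 3) := by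
        have h := QQ_S1 b c hb0 hc0 hbc2 hbc13 (U := ({i} : Finset V))
          (W := Finset.univ.erase i) 0
        rw [sd_single_erase i, c4_univ, hc0, c4_single i, c4_erase i] at h
        exact h
      have h2' : f (QQ b c (Finset.univ.erase i) {i} (0 + 1 + b 1 + b 3))
          = f (QQ b c (Finset.univ.erase i) {i} 0) + (0 + 1 + b 1 + b 3) :=
        QQ_shift b c f hb0 hc0 hbc2 hbc13 hfu hax (hene i) (hsne i)
          (herase_ne_single i) (0 + 1 + b 1 + b 3)
      have h3 := claimIII b c f hb0 hc0 hbc2 hbc13 hfu hax i (Finset.univ.erase i)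
        subset_rfl (Finset.nonempty_iff_ne_empty.mpr (hene i))
      rw [c2_erase i] at h3
      have e1 := (congrArg f h1).trans h1'
      have e2 := (congrArg f h2).trans h2'
      linear_combination -e1 + e2 - h3
        + z2_add_self (f (QQ b c (Finset.univ.erase i) {i} 0))
        - z2_add_self (∑ j ∈ Finset.univ.erase i, f (QQ b c {i} {j} 0))
        - z2_add_self 1 - z2_add_self (c 1)
    -- Key B: the same sum is 0
    have hpair : ∀ i j : V, i ≠ j →
        f (QQ b c {i} {j} 0) + f (QQ b c {j} {i} 0) = c 2 := by
      intro i j hij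
      have h := QQ_S1 b c hb0 hc0 hbc2 hbc13 (U := ({i} : Finset V)) (W := ({j} : Finset V)) 0
      rw [c4_pair i j hij, c4_single i, c4_single j] at h
      have h' := (congrArg f h).trans
        (QQ_shift b c f hb0 hc0 hbc2 hbc13 hfu hax (hsne j) (hsne i)
          (hsnd j i hij.symm) (0 + c 2 + b 1 + b 1))
      linear_combination h' + z2_add_self (f (QQ b c {j} {i} 0)) + z2_add_self (b 1)
    have hB : ∑ i : V, f (QQ b c Finset.univ {i} 0) = 0 := by
      have hstep : ∑ i : V, f (QQ b c Finset.univ {i} 0)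
          = ∑ i : V, ((∑ j ∈ Finset.univ.erase i, f (QQ b c {i} {j} 0))
              + (1 + b 1 + b 3 + c 1)) :=
        Finset.sum_congr rfl (fun i _ => hii i)
      rw [Finset.sum_add_distrib, Finset.sum_const] at hstep
      have hncast : ((Fintype.card V : ℕ) : ZMod 2) = 0 :=
        (ZMod.natCast_eq_zero_iff (Fintype.card V) 2).mpr
          (dvd_trans (by norm_num) h4)
      have hKzero : ((Finset.univ : Finset V).card • (1 + b 1 + b 3 + c 1) : ZMod 2) = 0 := by
        rw [Finset.card_univ, nsmul_eq_mul, hncast, zero_mul]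
      rw [hKzero, add_zero] at hstep
      -- double sum over offDiag
      have hsig : ∑ i : V, ∑ j ∈ Finset.univ.erase i, f (QQ b c {i} {j} 0)
          = ∑ p ∈ (Finset.univ : Finset V).offDiag, f (QQ b c {p.1} {p.2} 0) := by
        rw [Finset.sum_sigma' Finset.univ (fun i => Finset.univ.erase i)
          (fun i j => f (QQ b c {i} {j} 0))]
        refine Finset.sum_nbij' (fun p => (p.1, p.2)) (fun p => ⟨p.1, p.2⟩)
          ?_ ?_ ?_ ?_ ?_
        · intro a ha
          rw [Finset.mem_sigma] at ha
          rw [Finset.mem_offDiag]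
          exact ⟨Finset.mem_univ _, Finset.mem_univ _,
            fun h => (Finset.mem_erase.mp ha.2).1 h.symm⟩
        · intro a ha
          rw [Finset.mem_offDiag] at ha
          rw [Finset.mem_sigma]
          exact ⟨Finset.mem_univ _, Finset.mem_erase.mpr ⟨fun h => ha.2.2 h.symm,
            Finset.mem_univ _⟩⟩
        · intro a _; rfl
        · intro a _; rfl
        · intro a _; rfl
      rw [hsig] at hstep
      -- split by order and pair up
      set r : V → ℕ := fun v => ((Fintype.equivFin V) v : ℕ) with hr
      have hrinj : ∀ {x y : V}, r x = r y → x = y := by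
        intro x y h
        exact (Fintype.equivFin V).injective (Fin.val_injective h)
      have hsplit := Finset.sum_filter_add_sum_filter_not
        ((Finset.univ : Finset V).offDiag) (fun p => r p.1 < r p.2)
        (fun p => f (QQ b c {p.1} {p.2} 0))
      set P₁ := ((Finset.univ : Finset V).offDiag).filter (fun p => r p.1 < r p.2) with hP₁
      set P₂ := ((Finset.univ : Finset V).offDiag).filter (fun p => ¬ r p.1 < r p.2) with hP₂
      have hmem12 : ∀ p : V × V, p ∈ P₂ → p.swap ∈ P₁ := by
        intro p hp
        rw [hP₂, Finset.mem_filter, Finset.mem_offDiag] at hp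
        rw [hP₁, Finset.mem_filter, Finset.mem_offDiag]
        refine ⟨⟨Finset.mem_univ _, Finset.mem_univ _, fun h => hp.1.2.2 h.symm⟩, ?_⟩
        exact lt_of_le_of_ne (not_lt.mp hp.2) (fun h => hp.1.2.2 (hrinj h).symm)
      have hmem21 : ∀ p : V × V, p ∈ P₁ → p.swap ∈ P₂ := by
        intro p hp
        rw [hP₁, Finset.mem_filter, Finset.mem_offDiag] at hp
        rw [hP₂, Finset.mem_filter, Finset.mem_offDiag]
        exact ⟨⟨Finset.mem_univ _, Finset.mem_univ _, fun h => hp.1.2.2 h.symm⟩,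
          not_lt.mpr (le_of_lt hp.2)⟩
      have hswap : ∑ p ∈ P₂, f (QQ b c {p.1} {p.2} 0)
          = ∑ p ∈ P₁, f (QQ b c {p.2} {p.1} 0) := by
        refine Finset.sum_nbij' Prod.swap Prod.swap hmem12 hmem21
          (fun a _ => Prod.swap_swap a) (fun a _ => Prod.swap_swap a) (fun a _ => rfl)
      have hpairsum : ∑ p ∈ P₁, (f (QQ b c {p.1} {p.2} 0) + f (QQ b c {p.2} {p.1} 0))
          = ∑ p ∈ P₁, c 2 := by
        refine Finset.sum_congr rfl (fun p hp => ?_)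
        rw [hP₁, Finset.mem_filter, Finset.mem_offDiag] at hp
        exact hpair p.1 p.2 hp.1.2.2
      rw [Finset.sum_add_distrib] at hpairsum
      have hcards : P₁.card = P₂.card :=
        Finset.card_nbij' Prod.swap Prod.swap hmem21 hmem12
          (fun a _ => Prod.swap_swap a) (fun a _ => Prod.swap_swap a)
      have hofftot : P₁.card + P₂.card = (Finset.univ : Finset V).offDiag.card :=
        Finset.card_filter_add_card_filter_not _
      have hoffcard : ((Finset.univ : Finset V).offDiag).card
          = Fintype.card V * Fintype.card V - Fintype.card V := by
        rw [Finset.offDiag_card, Finset.card_univ]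
      have heven : 2 ∣ P₁.card := by
        obtain ⟨m, hm⟩ := h4
        have hmul : Fintype.card V * Fintype.card V - Fintype.card V
            = Fintype.card V * (Fintype.card V - 1) := (Nat.mul_sub_one _ _).symm
        have hprod : Fintype.card V * (Fintype.card V - 1)
            = 4 * (m * (Fintype.card V - 1)) := by rw [hm]; ring
        omega
      have hc2zero : (P₁.card • (c 2) : ZMod 2) = 0 := by
        obtain ⟨k, hk⟩ := heven
        rw [nsmul_eq_mul, hk, Nat.cast_mul, (by decide : ((2 : ℕ) : ZMod 2) = 0),
          zero_mul, zero_mul]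
      rw [Finset.sum_const] at hpairsum
      -- now combine: hstep : T = ∑ offDiag; hsplit: P₁ + P₂ = offDiag sum;
      -- hswap; hpairsum : ∑P₁ f12 + ∑P₁ f21 = card • c2 = 0
      rw [hc2zero] at hpairsum
      rw [hstep, ← hsplit, hswap]
      linear_combination hpairsum
    rw [hA] at hB
    exact (by decide : (1 : ZMod 2) ≠ 0) hB
end
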